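/- arXiv:2502.15330 — 7 statements merged into one kernel-verified Lean document; each statement's English description precedes it below -/
import Mathlib

section
/- Let V be a finite vertex set, let I be a set of edges on V, let D ⊆ I be a set of deleted edges, and set E = I \ D and G = (V, E). Let M_1, …, M_L ⊆ I be matchings such that for every j ∈ {1, …, L}, M_j is a maximal matching of the graph (V, I \ (M_1 ∪ … ∪ M_{j-1})). Fix ℓ ∈ {1, …, L} and a subset F ⊆ E, and let M ⊆ E be a matching of G such that: (i) every vertex matched by M_ℓ is either matched by M, or all edges of E incident to it belong to F; and (ii) no edge of F ∪ ((M_1 ∪ … ∪ M_{ℓ-1}) \ D) can be added to M while keeping M a matching. Then M is a maximal matching of G. -/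
/-- A matching: a set of non-loop edges that pairwise share no endpoint. -/
def IsMatching {V : Type} (M : Finset (Sym2 V)) : Prop :=
  (∀ e ∈ M, ¬ e.IsDiag) ∧ ∀ e ∈ M, ∀ f ∈ M, e ≠ f → ∀ v : V, ¬ (v ∈ e ∧ v ∈ f)

/-- A maximal matching of the graph with edge set `E`: a matching contained in `E`
such that no edge of `E` can be added to it while keeping it a matching. -/
def IsMaximalMatching {V : Type} [DecidableEq V] (E M : Finset (Sym2 V)) : Prop :=
  IsMatching M ∧ M ⊆ E ∧ ∀ e ∈ E, IsMatching (insert e M) → e ∈ M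

/-- Paper's Lemma 3.1 (key repair lemma), static simple-edge-set form.
`I` is the set of inserted edges, `D ⊆ I` the deleted ones, `E = I \ D`, and
`M 0, …, M (L-1)` is a hierarchical maximal matching structure on `I`.
If every vertex matched by `M ℓ` is either matched by `M'` or has all of its
incident `E`-edges in `F`, and no edge of `F ∪ ((M 0 ∪ … ∪ M (ℓ-1)) \ D)` can be
added to `M'`, then `M'` is a maximal matching of `(V, E)`. -/
theorem stmt0 {V : Type} [Fintype V] [DecidableEq V]
    (I D : Finset (Sym2 V)) (hIloop : ∀ e ∈ I, ¬ e.IsDiag) (hDI : D ⊆ I)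
    (L : ℕ) (M : Fin L → Finset (Sym2 V))
    (hMI : ∀ j, M j ⊆ I)
    (hHier : ∀ j : Fin L, IsMaximalMatching (I \ (Finset.Iio j).biUnion M) (M j))
    (ℓ : Fin L) (F : Finset (Sym2 V)) (hF : F ⊆ I \ D)
    (M' : Finset (Sym2 V)) (hM'sub : M' ⊆ I \ D) (hM' : IsMatching M')
    (hcover : ∀ v : V, (∃ e ∈ M ℓ, v ∈ e) →
      (∃ e ∈ M', v ∈ e) ∨ (∀ e ∈ I \ D, v ∈ e → e ∈ F))
    (hgreedy : ∀ e ∈ F ∪ ((Finset.Iio ℓ).biUnion M \ D),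
      IsMatching (insert e M') → e ∈ M') :
    IsMaximalMatching (I \ D) M' := by
  refine ⟨hM', hM'sub, ?_⟩
  intro e heE hins
  by_contra heM'
  have heF : e ∉ F := fun h => heM' (hgreedy e (Finset.mem_union_left _ h) hins)
  have heD : e ∉ D := (Finset.mem_sdiff.mp heE).2
  have heB : e ∉ (Finset.Iio ℓ).biUnion M := fun h =>
    heM' (hgreedy e (Finset.mem_union_right _ (Finset.mem_sdiff.mpr ⟨h, heD⟩)) hins)
  have heI : e ∈ I \ (Finset.Iio ℓ).biUnion M :=
    Finset.mem_sdiff.mpr ⟨(Finset.mem_sdiff.mp heE).1, heB⟩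
  obtain ⟨⟨hMat1, hMat2⟩, hMsub, hMax⟩ := hHier ℓ
  -- there exists a vertex of e matched by M ℓ
  have hvmatch : ∃ v, v ∈ e ∧ ∃ f ∈ M ℓ, v ∈ f := by
    by_cases heMl : e ∈ M ℓ
    · exact ⟨e.out.1, Sym2.out_fst_mem e, e, heMl, Sym2.out_fst_mem e⟩
    · have hnm : ¬ IsMatching (insert e (M ℓ)) := fun h => heMl (hMax e heI h)
      have h1 : ∀ f ∈ insert e (M ℓ), ¬ f.IsDiag := by
        intro f hf
        rcases Finset.mem_insert.mp hf with rfl | hf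
        · exact hIloop f (Finset.mem_sdiff.mp heE).1
        · exact hMat1 f hf
      have h2 : ¬ ∀ f ∈ insert e (M ℓ), ∀ g ∈ insert e (M ℓ), f ≠ g →
          ∀ v : V, ¬ (v ∈ f ∧ v ∈ g) := fun h => hnm ⟨h1, h⟩
      push_neg at h2
      obtain ⟨f, hfi, g, hgi, hfg, v, hvf, hvg⟩ := h2
      rcases Finset.mem_insert.mp hfi with rfl | hf'
      · rcases Finset.mem_insert.mp hgi with rfl | hg'
        · exact absurd rfl hfg
        · exact ⟨v, hvf, g, hg', hvg⟩
      · rcases Finset.mem_insert.mp hgi with rfl | hg'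
        · exact ⟨v, hvg, f, hf', hvf⟩
        · exact absurd ⟨hvf, hvg⟩ (hMat2 f hf' g hg' hfg v)
  obtain ⟨v, hve, f, hf, hvf⟩ := hvmatch
  rcases hcover v ⟨f, hf, hvf⟩ with ⟨g, hg, hvg⟩ | hall
  · have hne : e ≠ g := fun h => heM' (h ▸ hg)
    exact hins.2 e (Finset.mem_insert_self _ _) g
      (Finset.mem_insert_of_mem hg) hne v ⟨hve, hvg⟩
  · exact heF (hall e heE hve)
end

section
/- Let a, b, n be natural numbers with a < n and b ≤ n − a. Then C(n − a, b) / C(n, b) ≤ (1 − b/n)^a, where C(·,·) denotes the binomial coefficient and the quotient and power are taken over the reals. -/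
/-- Paper's Lemma A.1: for naturals `a < n` and `b ≤ n - a`,
`C(n-a, b) / C(n, b) ≤ (1 - b/n)^a` over the reals. -/
theorem stmt2 (a b n : ℕ) (ha : a < n) (hb : b ≤ n - a) :
    ((n - a).choose b : ℝ) / (n.choose b : ℝ) ≤ (1 - (b : ℝ) / (n : ℝ)) ^ a := by
  induction a with
  | zero =>
    simp only [Nat.sub_zero, pow_zero]
    rw [div_self]
    exact_mod_cast (Nat.choose_pos (by omega : b ≤ n)).ne'
  | succ a ih =>
    have ha' : a < n := by omega
    have hb' : b ≤ n - a := by omega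
    have hnpos : (0:ℝ) < n := by exact_mod_cast (by omega : 0 < n)
    have hbn : (b:ℝ) ≤ n := by exact_mod_cast (by omega : b ≤ n)
    set m := n - a with hm
    have hmpos : 0 < m := by omega
    have hbm : b ≤ m - 1 := by omega
    have key : (m-1).choose b * m = m.choose b * (m - b) := by
      have := Nat.choose_mul_succ_eq (m-1) b
      simpa [Nat.sub_add_cancel hmpos] using this
    have hnc : (0:ℝ) < n.choose b := by
      exact_mod_cast Nat.choose_pos (by omega : b ≤ n)
    have hmc : (0:ℝ) < m.choose b := by
      exact_mod_cast Nat.choose_pos (by omega : b ≤ m)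
    have hmR : (0:ℝ) < m := by exact_mod_cast hmpos
    have hbmR : (b:ℝ) ≤ m := by exact_mod_cast (by omega : b ≤ m)
    have hsub : n - (a+1) = m - 1 := by omega
    have keyR : ((m-1).choose b : ℝ) * m = m.choose b * ((m:ℝ) - b) := by
      have := congrArg (Nat.cast : ℕ → ℝ) key
      push_cast [Nat.cast_sub (by omega : b ≤ m)] at this
      linarith [this]
    have heq : ((n - (a+1)).choose b : ℝ) / (n.choose b) =
        (((m:ℝ) - b)/m) * ((m.choose b : ℝ) / n.choose b) := by
      rw [hsub]
      field_simp
      linear_combination keyR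
    rw [heq, pow_succ, mul_comm ((1 - (b:ℝ)/n)^a)]
    have h1 : ((m:ℝ) - b)/m ≤ 1 - (b:ℝ)/n := by
      rw [div_le_iff₀ hmR]
      have hmn : (m:ℝ) ≤ n := by exact_mod_cast (by omega : m ≤ n)
      have : (1 - (b:ℝ)/n) * m = m - (b:ℝ)*m/n := by ring
      rw [this]
      have : (b:ℝ)*m/n ≤ b := by
        rw [div_le_iff₀ hnpos]
        nlinarith [Nat.cast_nonneg (α := ℝ) b]
      linarith
    have h2 : (m.choose b : ℝ) / n.choose b ≤ (1 - (b:ℝ)/n)^a := ih ha' hb'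
    have hpos1 : (0:ℝ) ≤ ((m:ℝ) - b)/m := div_nonneg (by linarith) hmR.le
    have hpos2 : (0:ℝ) ≤ (m.choose b : ℝ) / n.choose b := by positivity
    calc ((m:ℝ) - b)/m * ((m.choose b : ℝ) / n.choose b)
        ≤ (1 - (b:ℝ)/n) * ((m.choose b : ℝ) / n.choose b) :=
          mul_le_mul_of_nonneg_right h1 hpos2
      _ ≤ (1 - (b:ℝ)/n) * (1 - (b:ℝ)/n)^a := by
          apply mul_le_mul_of_nonneg_left h2
          have : (b:ℝ)/n ≤ 1 := by rw [div_le_one hnpos]; exact hbn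
          linarith
end

section
/- (Information-theoretic form of the Embedded-Augmented-Index lower bound, Theorem 4.1.) Let s, t ≥ 1 be integers and ε ∈ (0, 1/2). Let X = (X_i[j])_{i ∈ [s], j ∈ [t]} be s·t independent uniform bits; let R be a random variable with finite range, independent of X; let (I, J) be uniformly distributed on [s] × [t] and independent of (X, R); let M = f(X, R) for some function f with finite range; and let X̃ = g(I, J, (X_I[j])_{J < j ≤ t}, R, M) ∈ {0,1} for some function g. If Pr[X̃ = X_I[J]] ≥ 1/2 + ε, then H(M) ≥ (1 − H₂(1/2 − ε)) · s · t, where entropy is measured in bits (logarithm base 2). -/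
set_option linter.unusedSectionVars false
set_option linter.unusedVariables false
set_option maxHeartbeats 4000000

/-- Probability of the event `E` under the probability mass function `p`
on the finite sample space `Ω`. -/
noncomputable def prP {Ω : Type} [Fintype Ω] (p : Ω → ℝ) (E : Set Ω) : ℝ :=
  ∑ ω : Ω, E.indicator p ω

/-- Shannon entropy in bits (base 2) of the random variable `X` on the finite
probability space `(Ω, p)`. -/
noncomputable def ent2 {Ω β : Type} [Fintype Ω] [Fintype β] (p : Ω → ℝ) (X : Ω → β) : ℝ :=
  ∑ b : β, -(prP p {ω | X ω = b}) * Real.logb 2 (prP p {ω | X ω = b})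

/-- The binary entropy function (base 2). -/
noncomputable def binEnt2 (q : ℝ) : ℝ :=
  -q * Real.logb 2 q - (1 - q) * Real.logb 2 (1 - q)

namespace S7
open scoped Classical
variable {Ω β γ α : Type} [Fintype Ω]

lemma prP_eq (p : Ω → ℝ) (Q : Ω → Prop) :
    prP p {ω | Q ω} = ∑ ω : Ω, if Q ω then p ω else 0 := by
  unfold prP
  refine Finset.sum_congr rfl fun ω _ => ?_
  simp [Set.indicator_apply, Set.mem_setOf_eq]

lemma prP_nonneg (p : Ω → ℝ) (hp0 : ∀ ω, 0 ≤ p ω) (Q : Ω → Prop) :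
    0 ≤ prP p {ω | Q ω} := by
  rw [prP_eq]
  refine Finset.sum_nonneg fun ω _ => ?_
  split <;> simp [hp0 ω]

lemma prP_mono (p : Ω → ℝ) (hp0 : ∀ ω, 0 ≤ p ω) {Q Q' : Ω → Prop}
    (h : ∀ ω, Q ω → Q' ω) : prP p {ω | Q ω} ≤ prP p {ω | Q' ω} := by
  rw [prP_eq, prP_eq]
  refine Finset.sum_le_sum fun ω _ => ?_
  by_cases hq : Q ω
  · simp [hq, h ω hq]
  · simp only [if_neg hq]; split <;> simp [hp0 ω]

lemma prP_le_one (p : Ω → ℝ) (hp0 : ∀ ω, 0 ≤ p ω) (hp1 : ∑ ω : Ω, p ω = 1)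
    (Q : Ω → Prop) : prP p {ω | Q ω} ≤ 1 := by
  rw [prP_eq, ← hp1]
  refine Finset.sum_le_sum fun ω _ => ?_
  split <;> simp [hp0 ω]

variable [Fintype β] [Fintype γ] [Fintype α]

lemma sum_prP (p : Ω → ℝ) (hp1 : ∑ ω : Ω, p ω = 1) (A : Ω → β) :
    ∑ b : β, prP p {ω | A ω = b} = 1 := by
  simp only [prP_eq]
  rw [Finset.sum_comm, ← hp1]
  refine Finset.sum_congr rfl fun ω _ => ?_
  simp

lemma prP_comp (p : Ω → ℝ) (A : Ω → β) (ψ : β → γ) (d : γ) :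
    prP p {ω | ψ (A ω) = d} = ∑ b : β, if ψ b = d then prP p {ω | A ω = b} else 0 := by
  simp only [prP_eq]
  have step : ∀ b : β, (if ψ b = d then (∑ ω : Ω, if A ω = b then p ω else 0) else 0)
      = ∑ ω : Ω, if A ω = b then (if ψ b = d then p ω else 0) else 0 := by
    intro b; split
    · rfl
    · simp
  rw [Finset.sum_congr rfl fun b _ => step b, Finset.sum_comm]
  refine Finset.sum_congr rfl fun ω _ => ?_
  have : ∀ b : β, (if A ω = b then (if ψ b = d then p ω else 0) else 0)
      = if A ω = b then (if ψ (A ω) = d then p ω else 0) else 0 := by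
    intro b; by_cases hb : A ω = b <;> simp [hb]
  rw [Finset.sum_congr rfl fun b _ => this b]
  simp

lemma prP_pred (p : Ω → ℝ) (V : Ω → β) (Q : β → Prop) :
    prP p {ω | Q (V ω)} = ∑ b : β, if Q b then prP p {ω | V ω = b} else 0 := by
  simp only [prP_eq]
  have step : ∀ b : β, (if Q b then (∑ ω : Ω, if V ω = b then p ω else 0) else 0)
      = ∑ ω : Ω, if V ω = b then (if Q b then p ω else 0) else 0 := by
    intro b; split
    · rfl
    · simp
  rw [Finset.sum_congr rfl fun b _ => step b, Finset.sum_comm]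
  refine Finset.sum_congr rfl fun ω _ => ?_
  have : ∀ b : β, (if V ω = b then (if Q b then p ω else 0) else 0)
      = if V ω = b then (if Q (V ω) then p ω else 0) else 0 := by
    intro b; by_cases hb : V ω = b <;> simp [hb]
  rw [Finset.sum_congr rfl fun b _ => this b]
  simp

lemma pushSum (p : Ω → ℝ) (A : Ω → β) (ψ : β → γ) (h : γ → ℝ) :
    ∑ b : β, prP p {ω | A ω = b} * h (ψ b)
      = ∑ d : γ, prP p {ω | ψ (A ω) = d} * h d := by
  simp only [prP_comp p A ψ]
  have step : ∀ d : γ, (∑ b : β, if ψ b = d then prP p {ω | A ω = b} else 0) * h d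
      = ∑ b : β, if ψ b = d then prP p {ω | A ω = b} * h d else 0 := by
    intro d
    rw [Finset.sum_mul]
    refine Finset.sum_congr rfl fun b _ => ?_
    split <;> simp
  rw [Finset.sum_congr rfl fun d _ => step d, Finset.sum_comm]
  refine Finset.sum_congr rfl fun b _ => ?_
  have : ∀ d : γ, (if ψ b = d then prP p {ω | A ω = b} * h d else 0)
      = if ψ b = d then prP p {ω | A ω = b} * h (ψ b) else 0 := by
    intro d; by_cases hd : ψ b = d <;> simp [hd]
  rw [Finset.sum_congr rfl fun d _ => this d]
  simp

lemma gibbs {ι : Type} (u : Finset ι) (a b : ι → ℝ) (ha : ∀ i ∈ u, 0 ≤ a i)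
    (hb : ∀ i ∈ u, 0 ≤ b i) (hab : ∀ i ∈ u, a i ≠ 0 → b i ≠ 0)
    (hs : ∑ i ∈ u, b i ≤ ∑ i ∈ u, a i) :
    ∑ i ∈ u, a i * Real.log (b i) ≤ ∑ i ∈ u, a i * Real.log (a i) := by
  have key : ∀ i ∈ u, a i * Real.log (b i) - a i * Real.log (a i) ≤ b i - a i := by
    intro i hi
    rcases eq_or_lt_of_le (ha i hi) with h0 | hpos
    · rw [← h0]; simpa using hb i hi
    · have hbpos : 0 < b i := (hb i hi).lt_of_ne (Ne.symm (hab i hi (ne_of_gt hpos)))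
      have hlog := Real.log_le_sub_one_of_pos (div_pos hbpos hpos)
      rw [Real.log_div (ne_of_gt hbpos) (ne_of_gt hpos)] at hlog
      have h2 := mul_le_mul_of_nonneg_left hlog (le_of_lt hpos)
      have h3 : a i * (b i / a i - 1) = b i - a i := by
        field_simp
      nlinarith [h2, h3]
  have := Finset.sum_le_sum key
  rw [Finset.sum_sub_distrib, Finset.sum_sub_distrib] at this
  linarith

/-- Shannon entropy in nats. -/
noncomputable def hn (p : Ω → ℝ) {β : Type} [Fintype β] (A : Ω → β) : ℝ :=
  ∑ b : β, Real.negMulLog (prP p {ω | A ω = b})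

lemma expandHn (p : Ω → ℝ) (C : Ω → γ) :
    hn p C = -∑ d : γ, prP p {ω | C ω = d} * Real.log (prP p {ω | C ω = d}) := by
  unfold hn
  rw [← Finset.sum_neg_distrib]
  exact Finset.sum_congr rfl fun d _ => by rw [Real.negMulLog]; ring

lemma hn_congr (p : Ω → ℝ) (A B : Ω → β) (h : ∀ ω, A ω = B ω) : hn p A = hn p B := by
  have : A = B := funext h
  rw [this]

lemma hn_relabel (p : Ω → ℝ) (A : Ω → β) (σ : β → γ) (hσ : Function.Injective σ) :
    hn p (fun ω => σ (A ω)) = hn p A := by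
  unfold hn
  rw [← Finset.sum_subset (Finset.subset_univ (Finset.univ.image σ))]
  · rw [Finset.sum_image (fun x _ y _ h => hσ h)]
    refine Finset.sum_congr rfl fun b _ => ?_
    congr 1
    congr 1
    ext ω
    simp only [Set.mem_setOf_eq]
    exact ⟨fun h => hσ h, fun h => by rw [h]⟩
  · intro c _ hc
    have : prP p {ω | σ (A ω) = c} = 0 := by
      rw [prP_eq]
      refine Finset.sum_eq_zero fun ω _ => ?_
      rw [if_neg]
      intro h
      exact hc (Finset.mem_image.2 ⟨A ω, Finset.mem_univ _, h⟩)
    rw [this, Real.negMulLog_zero]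

lemma hn_pair_det (p : Ω → ℝ) (A : Ω → β) (φ : β → γ) :
    hn p (fun ω => (A ω, φ (A ω))) = hn p A :=
  hn_relabel p A (fun b => (b, φ b)) (fun x y h => (Prod.mk.injEq _ _ _ _ ▸ h).1)

/-- If `A` and `B` determine each other, they have the same entropy. -/
lemma hn_biDet (p : Ω → ℝ) (A : Ω → β) (B : Ω → γ) (φ : β → γ) (ψ : γ → β)
    (h1 : ∀ ω, B ω = φ (A ω)) (h2 : ∀ ω, A ω = ψ (B ω)) : hn p A = hn p B := by
  have e1 : hn p A = hn p (fun ω => (A ω, B ω)) := by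
    rw [← hn_pair_det p A φ]
    exact hn_congr _ _ _ fun ω => by rw [h1 ω]
  have e2 : hn p (fun ω => (B ω, A ω)) = hn p B := by
    rw [← hn_pair_det p B ψ]
    exact hn_congr _ _ _ fun ω => by rw [h2 ω]
  have e3 : hn p (fun ω => (B ω, A ω)) = hn p (fun ω => (A ω, B ω)) :=
    hn_relabel p (fun ω => (A ω, B ω)) Prod.swap Prod.swap_injective
  rw [e1, ← e2, e3]

lemma sum_pair_fst (p : Ω → ℝ) (A : Ω → β) (B : Ω → γ) (h : β → ℝ) :
    ∑ c : β × γ, prP p {ω | (A ω, B ω) = c} * h c.1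
      = ∑ b : β, prP p {ω | A ω = b} * h b := by
  have := pushSum p (fun ω => (A ω, B ω)) Prod.fst h
  simpa using this

lemma sum_pair_snd (p : Ω → ℝ) (A : Ω → β) (B : Ω → γ) (h : γ → ℝ) :
    ∑ c : β × γ, prP p {ω | (A ω, B ω) = c} * h c.2
      = ∑ b : γ, prP p {ω | B ω = b} * h b := by
  have := pushSum p (fun ω => (A ω, B ω)) Prod.snd h
  simpa using this

/-- Subadditivity: `H(A,B) ≤ H(A) + H(B)`. -/
lemma hn_subadd (p : Ω → ℝ) (hp0 : ∀ ω, 0 ≤ p ω) (hp1 : ∑ ω : Ω, p ω = 1)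
    (A : Ω → β) (B : Ω → γ) :
    hn p (fun ω => (A ω, B ω)) ≤ hn p A + hn p B := by
  classical
  set q : β × γ → ℝ := fun c => prP p {ω | (A ω, B ω) = c} with hq
  set qa : β → ℝ := fun b => prP p {ω | A ω = b} with hqa
  set qb : γ → ℝ := fun c => prP p {ω | B ω = c} with hqb
  have hkey : ∑ c : β × γ, q c * Real.log (qa c.1 * qb c.2)
      ≤ ∑ c : β × γ, q c * Real.log (q c) := by
    apply gibbs
    · intro c _; exact prP_nonneg p hp0 _
    · intro c _; exact mul_nonneg (prP_nonneg p hp0 _) (prP_nonneg p hp0 _)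
    · intro c _ hne
      have h1 : q c ≤ qa c.1 := prP_mono p hp0 (fun ω h => congrArg Prod.fst h)
      have h2 : q c ≤ qb c.2 := prP_mono p hp0 (fun ω h => congrArg Prod.snd h)
      have h0 : 0 < q c := (prP_nonneg p hp0 _).lt_of_ne (Ne.symm hne)
      exact (mul_pos (h0.trans_le h1) (h0.trans_le h2)).ne'
    · have : ∑ c : β × γ, qa c.1 * qb c.2 = 1 := by
        rw [Fintype.sum_prod_type]
        have : ∀ b : β, ∑ c : γ, qa b * qb c = qa b := by
          intro b
          rw [← Finset.mul_sum, sum_prP p hp1 B, mul_one]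
        rw [Finset.sum_congr rfl fun b _ => this b]
        exact sum_prP p hp1 A
      rw [this, ← sum_prP p hp1 (fun ω => (A ω, B ω))]
  have hsplit : ∑ c : β × γ, q c * Real.log (qa c.1 * qb c.2)
      = ∑ b : β, qa b * Real.log (qa b) + ∑ c : γ, qb c * Real.log (qb c) := by
    have step : ∀ c : β × γ, q c * Real.log (qa c.1 * qb c.2)
        = q c * Real.log (qa c.1) + q c * Real.log (qb c.2) := by
      intro c
      rcases eq_or_ne (q c) 0 with h0 | h0
      · simp [h0]
      · have h1 : q c ≤ qa c.1 := prP_mono p hp0 (fun ω h => congrArg Prod.fst h)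
        have h2 : q c ≤ qb c.2 := prP_mono p hp0 (fun ω h => congrArg Prod.snd h)
        have hq0 : 0 < q c := (prP_nonneg p hp0 _).lt_of_ne (Ne.symm h0)
        rw [Real.log_mul (hq0.trans_le h1).ne' (hq0.trans_le h2).ne', mul_add]
    rw [Finset.sum_congr rfl fun c _ => step c, Finset.sum_add_distrib,
      sum_pair_fst p A B (fun b => Real.log (qa b)),
      sum_pair_snd p A B (fun c => Real.log (qb c))]
  have expand : ∀ {δ : Type} [Fintype δ] (C : Ω → δ),
      hn p C = -∑ d : δ, prP p {ω | C ω = d} * Real.log (prP p {ω | C ω = d}) := by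
    intro δ _ C
    unfold hn
    rw [← Finset.sum_neg_distrib]
    exact Finset.sum_congr rfl fun d _ => by rw [Real.negMulLog]; ring
  rw [expand (fun ω => (A ω, B ω)), expand A, expand B]
  have e1 : ∑ c : β × γ, q c * Real.log (q c)
      = ∑ c : β × γ, prP p {ω | (A ω, B ω) = c} * Real.log (prP p {ω | (A ω, B ω) = c}) := rfl
  linarith [hkey, hsplit.symm.le, hsplit.le]

lemma marg_snd (p : Ω → ℝ) (A : Ω → α) (D : Ω → γ) (d : γ) :
    ∑ a : α, prP p {ω | (A ω, D ω) = (a, d)} = prP p {ω | D ω = d} := by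
  simp only [prP_eq]
  rw [Finset.sum_comm]
  refine Finset.sum_congr rfl fun ω _ => ?_
  by_cases hd : D ω = d
  · simp [Prod.ext_iff, hd]
  · simp [Prod.ext_iff, hd]

/-- Conditioning on more reduces entropy: if `D = φ ∘ C` then `H(A|C) ≤ H(A|D)`. -/
lemma cond_reduce (p : Ω → ℝ) (hp0 : ∀ ω, 0 ≤ p ω) (hp1 : ∑ ω : Ω, p ω = 1)
    (A : Ω → α) (C : Ω → β) (φ : β → γ) :
    hn p (fun ω => (A ω, C ω)) - hn p C
      ≤ hn p (fun ω => (A ω, φ (C ω))) - hn p (fun ω => φ (C ω)) := by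
  set Pac : α × β → ℝ := fun c => prP p {ω | (A ω, C ω) = c} with hPac
  set Pc : β → ℝ := fun c => prP p {ω | C ω = c} with hPc
  set Pad : α × γ → ℝ := fun c => prP p {ω | (A ω, φ (C ω)) = c} with hPad
  set Pd : γ → ℝ := fun d => prP p {ω | φ (C ω) = d} with hPd
  have hCle : ∀ c : β, Pc c ≤ Pd (φ c) := fun c =>
    prP_mono p hp0 (fun ω h => by rw [h])
  have hACle : ∀ c : α × β, Pac c ≤ Pad (c.1, φ c.2) := fun c =>
    prP_mono p hp0 (fun ω h => by
      have h1 : A ω = c.1 := congrArg Prod.fst h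
      have h2 : C ω = c.2 := congrArg Prod.snd h
      rw [h1, h2])
  have hACc : ∀ c : α × β, Pac c ≤ Pc c.2 := fun c =>
    prP_mono p hp0 (fun ω h => congrArg Prod.snd h)
  have hmarg : ∀ d : γ, ∑ a : α, Pad (a, d) = Pd d := fun d =>
    marg_snd p A (fun ω => φ (C ω)) d
  set b : α × β → ℝ := fun c => Pc c.2 * Pad (c.1, φ c.2) / Pd (φ c.2) with hbdef
  have hkey : ∑ c : α × β, Pac c * Real.log (b c) ≤ ∑ c : α × β, Pac c * Real.log (Pac c) := by
    apply gibbs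
    · intro c _; exact prP_nonneg p hp0 _
    · intro c _
      have h1 : (0:ℝ) ≤ Pc c.2 := prP_nonneg p hp0 _
      have h2 : (0:ℝ) ≤ Pad (c.1, φ c.2) := prP_nonneg p hp0 _
      have h3 : (0:ℝ) ≤ Pd (φ c.2) := prP_nonneg p hp0 _
      positivity
    · intro c _ hne
      have h0 : 0 < Pac c := (prP_nonneg p hp0 _).lt_of_ne (Ne.symm hne)
      have h1 : 0 < Pc c.2 := h0.trans_le (hACc c)
      have h2 : 0 < Pad (c.1, φ c.2) := h0.trans_le (hACle c)
      have h3 : 0 < Pd (φ c.2) := h1.trans_le (hCle c.2)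
      have : 0 < b c := by rw [hbdef]; positivity
      exact this.ne'
    · have hsum_b : ∑ c : α × β, b c ≤ 1 := by
        have hrow : ∀ c2 : β, ∑ c1 : α, b (c1, c2) ≤ Pc c2 := by
          intro c2
          have : ∑ c1 : α, b (c1, c2) = Pc c2 * (Pd (φ c2))⁻¹ * ∑ c1 : α, Pad (c1, φ c2) := by
            rw [Finset.mul_sum]
            refine Finset.sum_congr rfl fun c1 _ => ?_
            rw [hbdef]; ring
          rw [this, hmarg (φ c2)]
          rcases eq_or_ne (Pd (φ c2)) 0 with h0 | h0
          · rw [h0]; simp; exact prP_nonneg p hp0 _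
          · rw [mul_assoc, inv_mul_cancel₀ h0, mul_one]
        calc ∑ c : α × β, b c = ∑ c2 : β, ∑ c1 : α, b (c1, c2) := by
              rw [Fintype.sum_prod_type]; exact Finset.sum_comm
          _ ≤ ∑ c2 : β, Pc c2 := Finset.sum_le_sum fun c2 _ => hrow c2
          _ = 1 := sum_prP p hp1 C
      rw [sum_prP p hp1 (fun ω => (A ω, C ω))]
      exact hsum_b
  have hsplit : ∑ c : α × β, Pac c * Real.log (b c)
      = (∑ c : α × β, Pac c * Real.log (Pc c.2))
        + (∑ c : α × β, Pac c * Real.log (Pad (c.1, φ c.2)))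
        - (∑ c : α × β, Pac c * Real.log (Pd (φ c.2))) := by
    rw [← Finset.sum_add_distrib, ← Finset.sum_sub_distrib]
    refine Finset.sum_congr rfl fun c _ => ?_
    rcases eq_or_ne (Pac c) 0 with h0 | h0
    · simp [h0]
    · have hq0 : 0 < Pac c := (prP_nonneg p hp0 _).lt_of_ne (Ne.symm h0)
      have h1 : 0 < Pc c.2 := hq0.trans_le (hACc c)
      have h2 : 0 < Pad (c.1, φ c.2) := hq0.trans_le (hACle c)
      have h3 : 0 < Pd (φ c.2) := h1.trans_le (hCle c.2)
      rw [hbdef]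
      rw [Real.log_div (by positivity) h3.ne', Real.log_mul h1.ne' h2.ne']
      ring
  have hS1 : ∑ c : α × β, Pac c * Real.log (Pc c.2)
      = ∑ c2 : β, Pc c2 * Real.log (Pc c2) := by
    have := pushSum p (fun ω => (A ω, C ω)) Prod.snd (fun c2 => Real.log (Pc c2))
    simpa using this
  have hS2 : ∑ c : α × β, Pac c * Real.log (Pad (c.1, φ c.2))
      = ∑ c : α × γ, Pad c * Real.log (Pad c) := by
    have := pushSum p (fun ω => (A ω, C ω)) (fun c => (c.1, φ c.2))
      (fun c => Real.log (Pad c))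
    simpa using this
  have hS3 : ∑ c : α × β, Pac c * Real.log (Pd (φ c.2))
      = ∑ d : γ, Pd d * Real.log (Pd d) := by
    have := pushSum p (fun ω => (A ω, C ω)) (fun c => φ c.2) (fun d => Real.log (Pd d))
    simpa using this
  rw [expandHn p (fun ω => (A ω, C ω)), expandHn p C,
    expandHn p (fun ω => (A ω, φ (C ω))), expandHn p (fun ω => φ (C ω))]
  have e1 : ∑ c : α × β, Pac c * Real.log (Pac c)
      = ∑ c : α × β, prP p {ω | (A ω, C ω) = c} * Real.log (prP p {ω | (A ω, C ω) = c}) := rfl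
  linarith [hkey, hsplit, hS1, hS2, hS3]

lemma hn_unit (p : Ω → ℝ) (hp1 : ∑ ω : Ω, p ω = 1) :
    hn p (fun _ : Ω => ()) = 0 := by
  unfold hn
  rw [Fintype.sum_unique]
  have : prP p {ω : Ω | (fun _ : Ω => ()) ω = ()} = 1 := by
    rw [prP_eq]; simpa using hp1
  rw [this, Real.negMulLog_one]

/-- Fano's inequality for a bit. -/
lemma fano (p : Ω → ℝ) (hp0 : ∀ ω, 0 ≤ p ω) (hp1 : ∑ ω : Ω, p ω = 1)
    (A : Ω → Bool) (C : Ω → γ) (G : γ → Bool) :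
    hn p (fun ω => (A ω, C ω)) - hn p C ≤
      Real.negMulLog (prP p {ω | ¬ (G (C ω) = A ω)})
        + Real.negMulLog (1 - prP p {ω | ¬ (G (C ω) = A ω)}) := by
  set E : Ω → Bool := fun ω => xor (A ω) (G (C ω)) with hE
  have h1 : hn p (fun ω => (A ω, C ω)) = hn p (fun ω => (E ω, C ω)) := by
    apply hn_biDet p _ _ (fun ac => (xor ac.1 (G ac.2), ac.2))
      (fun ec => (xor ec.1 (G ec.2), ec.2))
    · intro ω; rfl
    · intro ω
      have : ∀ a g : Bool, a = xor (xor a g) g := by decide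
      exact Prod.ext (this (A ω) (G (C ω))) rfl
  have h2 : hn p (fun ω => (E ω, C ω)) - hn p C
      ≤ hn p (fun ω => (E ω, ())) - hn p (fun _ : Ω => ()) :=
    cond_reduce p hp0 hp1 E C (fun _ => ())
  have h3 : hn p (fun ω => (E ω, ())) = hn p E := hn_pair_det p E (fun _ => ())
  have h4 : hn p E = Real.negMulLog (prP p {ω | E ω = true})
      + Real.negMulLog (prP p {ω | E ω = false}) := by
    unfold hn
    rw [Fintype.sum_bool]
  have h5 : prP p {ω | E ω = false} = 1 - prP p {ω | E ω = true} := by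
    have := sum_prP p hp1 E
    rw [Fintype.sum_bool] at this
    linarith
  have h6 : {ω | E ω = true} = {ω | ¬ (G (C ω) = A ω)} := by
    ext ω
    simp only [Set.mem_setOf_eq, hE]
    cases hA : A ω <;> cases hG : G (C ω) <;> simp
  rw [h1]
  rw [hn_unit p hp1] at h2
  rw [h6] at h4 h5
  rw [h3, h4, h5] at h2
  linarith

/-- Tangent bound for natural binary entropy. -/
lemma hnat_tangent (q δ : ℝ) (hq0 : 0 ≤ q) (hq1 : q ≤ 1) (hδ0 : 0 < δ) (hδ1 : δ < 1) :
    Real.negMulLog q + Real.negMulLog (1 - q) ≤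
      Real.negMulLog δ + Real.negMulLog (1 - δ)
        + (q - δ) * (Real.log (1 - δ) - Real.log δ) := by
  have hg : q * Real.log δ + (1 - q) * Real.log (1 - δ)
      ≤ q * Real.log q + (1 - q) * Real.log (1 - q) := by
    have := gibbs (Finset.univ : Finset Bool)
      (fun b => if b = true then q else 1 - q)
      (fun b => if b = true then δ else 1 - δ)
      (by intro i _; cases i <;> simp [hq0]; linarith)
      (by intro i _; cases i <;> simp [hδ0.le]; linarith)
      (by intro i _ h; cases i <;> simp <;> [linarith; exact hδ0.ne'])
      (by rw [Fintype.sum_bool, Fintype.sum_bool]; simp)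
    rw [Fintype.sum_bool, Fintype.sum_bool] at this
    simpa using this
  simp only [Real.negMulLog]
  nlinarith [hg]

lemma hn_indep (p : Ω → ℝ) (A : Ω → β) (B : Ω → γ) (hp1 : ∑ ω : Ω, p ω = 1)
    (h : ∀ (b : β) (c : γ), prP p {ω | A ω = b ∧ B ω = c}
      = prP p {ω | A ω = b} * prP p {ω | B ω = c}) :
    hn p (fun ω => (A ω, B ω)) = hn p A + hn p B := by
  unfold hn
  have hev : ∀ (b : β) (c : γ), prP p {ω | (A ω, B ω) = (b, c)}
      = prP p {ω | A ω = b} * prP p {ω | B ω = c} := by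
    intro b c
    rw [← h b c]
    congr 1
    ext ω
    simp [Prod.ext_iff]
  rw [Fintype.sum_prod_type]
  have step : ∀ b : β, ∑ c : γ, Real.negMulLog (prP p {ω | (A ω, B ω) = (b, c)})
      = (∑ c : γ, prP p {ω | B ω = c} * Real.negMulLog (prP p {ω | A ω = b}))
        + (∑ c : γ, prP p {ω | A ω = b} * Real.negMulLog (prP p {ω | B ω = c})) := by
    intro b
    rw [← Finset.sum_add_distrib]
    refine Finset.sum_congr rfl fun c _ => ?_
    rw [hev b c, Real.negMulLog_mul]
  rw [Finset.sum_congr rfl fun b _ => step b, Finset.sum_add_distrib]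
  congr 1
  · have h' : ∀ b : β, ∑ c : γ, prP p {ω | B ω = c} * Real.negMulLog (prP p {ω | A ω = b})
        = Real.negMulLog (prP p {ω | A ω = b}) := by
      intro b
      rw [← Finset.sum_mul, sum_prP p hp1 B, one_mul]
    rw [Finset.sum_congr rfl fun b _ => h' b]
  · rw [← Finset.sum_comm]
    have h' : ∀ c : γ, ∑ b : β, prP p {ω | A ω = b} * Real.negMulLog (prP p {ω | B ω = c})
        = Real.negMulLog (prP p {ω | B ω = c}) := by
      intro c
      rw [← Finset.sum_mul, sum_prP p hp1 A, one_mul]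
    rw [Finset.sum_congr rfl fun c _ => h' c]

def posIdx {s t : ℕ} (c : Fin s × Fin t) : ℕ := c.1.1 * t + (t - 1 - c.2.1)

lemma posIdx_lt {s t : ℕ} (ht : 1 ≤ t) (c : Fin s × Fin t) : posIdx c < s * t := by
  have h1 : c.1.1 + 1 ≤ s := c.1.2
  have h2 : (c.1.1 + 1) * t ≤ s * t := Nat.mul_le_mul_right t h1
  have h3 : posIdx c < (c.1.1 + 1) * t := by
    unfold posIdx
    have h4 : (c.1.1 + 1) * t = c.1.1 * t + t := by ring
    have := c.2.2
    omega
  omega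

lemma posIdx_div {s t : ℕ} (ht : 1 ≤ t) (c : Fin s × Fin t) : posIdx c / t = c.1.1 := by
  unfold posIdx
  rw [Nat.add_comm, Nat.add_mul_div_right _ _ (by omega : 0 < t),
    Nat.div_eq_of_lt (by omega : t - 1 - c.2.1 < t)]
  omega

lemma posIdx_mod {s t : ℕ} (ht : 1 ≤ t) (c : Fin s × Fin t) :
    posIdx c % t = t - 1 - c.2.1 := by
  unfold posIdx
  rw [Nat.add_comm, Nat.add_mul_mod_self_right, Nat.mod_eq_of_lt (by omega)]

lemma posIdx_inj {s t : ℕ} (ht : 1 ≤ t) {c c' : Fin s × Fin t}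
    (h : posIdx c = posIdx c') : c = c' := by
  have hd : c.1.1 = c'.1.1 := by
    rw [← posIdx_div ht c, ← posIdx_div ht c', h]
  have hm : t - 1 - c.2.1 = t - 1 - c'.2.1 := by
    rw [← posIdx_mod ht c, ← posIdx_mod ht c', h]
  have h2 := c.2.2
  have h2' := c'.2.2
  exact Prod.ext (Fin.ext hd) (Fin.ext (by omega))

def coI (s t : ℕ) (hs : 1 ≤ s) (ht : 1 ≤ t) (k : ℕ) : Fin s :=
  if hk : k < s * t then ⟨k / t, (Nat.div_lt_iff_lt_mul (by omega)).2 hk⟩ else ⟨0, hs⟩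

def coJ (t : ℕ) (ht : 1 ≤ t) (k : ℕ) : Fin t := ⟨t - 1 - k % t, by omega⟩

lemma posIdx_co {s t : ℕ} (hs : 1 ≤ s) (ht : 1 ≤ t) {k : ℕ} (hk : k < s * t) :
    posIdx (coI s t hs ht k, coJ t ht k) = k := by
  unfold posIdx coI coJ
  rw [dif_pos hk]
  show k / t * t + (t - 1 - (t - 1 - k % t)) = k
  have h1 : k % t < t := Nat.mod_lt _ (by omega)
  have h2 := Nat.div_add_mod' k t
  omega

lemma coI_posIdx {s t : ℕ} (hs : 1 ≤ s) (ht : 1 ≤ t) (c : Fin s × Fin t) :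
    coI s t hs ht (posIdx c) = c.1 := by
  unfold coI
  rw [dif_pos (posIdx_lt ht c)]
  exact Fin.ext (posIdx_div ht c)

lemma coJ_posIdx {s t : ℕ} (hs : 1 ≤ s) (ht : 1 ≤ t) (c : Fin s × Fin t) :
    coJ t ht (posIdx c) = c.2 := by
  refine Fin.ext ?_
  show t - 1 - posIdx c % t = c.2.1
  rw [posIdx_mod ht c]
  have := c.2.2
  omega

end S7

open S7

/-- Information-theoretic form of the Embedded-Augmented-Index lower bound
(paper's Theorem 4.1): `X` consists of `s·t` independent uniform bits (equivalently,
`X` is uniform on `Fin s → Fin t → Bool`), `R` is independent of `X`, `(I, J)` is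
uniform on `[s] × [t]` and independent of `(X, R)`, the message is `M = f(X, R)`, and
Bob's guess is `X̃ = g(I, J, suffix of X_I after J, R, M)`. If
`Pr[X̃ = X_I[J]] ≥ 1/2 + ε` then `H(M) ≥ (1 - H₂(1/2 - ε))·s·t` bits. -/
theorem stmt7 {Ω ρ μ : Type} [Fintype Ω] [Fintype ρ] [Fintype μ]
    (s t : ℕ) (hs : 1 ≤ s) (ht : 1 ≤ t)
    (ε : ℝ) (hε0 : 0 < ε) (hε1 : ε < 1 / 2)
    (p : Ω → ℝ) (hp0 : ∀ ω, 0 ≤ p ω) (hp1 : ∑ ω : Ω, p ω = 1)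
    (X : Ω → Fin s → Fin t → Bool) (R : Ω → ρ) (I : Ω → Fin s) (J : Ω → Fin t)
    (hXunif : ∀ x : Fin s → Fin t → Bool, prP p {ω | X ω = x} = 1 / 2 ^ (s * t))
    (hXR : ∀ (x : Fin s → Fin t → Bool) (r : ρ),
      prP p {ω | X ω = x ∧ R ω = r} = prP p {ω | X ω = x} * prP p {ω | R ω = r})
    (hIJ : ∀ (i : Fin s) (j : Fin t) (x : Fin s → Fin t → Bool) (r : ρ),
      prP p {ω | I ω = i ∧ J ω = j ∧ X ω = x ∧ R ω = r} =
        (1 / ((s : ℝ) * t)) * prP p {ω | X ω = x ∧ R ω = r})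
    (f : (Fin s → Fin t → Bool) → ρ → μ)
    (g : Fin s → Fin t → (Fin t → Bool) → ρ → μ → Bool)
    (hsucc : 1 / 2 + ε ≤ prP p {ω |
      g (I ω) (J ω) (fun j' => if J ω < j' then X ω (I ω) j' else false) (R ω)
          (f (X ω) (R ω)) = X ω (I ω) (J ω)}) :
    (1 - binEnt2 (1 / 2 - ε)) * (s * t) ≤ ent2 p (fun ω => f (X ω) (R ω)) := by
  classical
  have hsR : (1:ℝ) ≤ (s:ℝ) := by exact_mod_cast hs
  have htR : (1:ℝ) ≤ (t:ℝ) := by exact_mod_cast ht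
  have hstR : (0:ℝ) < (s:ℝ) * t := by nlinarith
  set δ : ℝ := 1/2 - ε with hδdef
  have hδ0 : 0 < δ := by rw [hδdef]; linarith
  have hδ1 : δ < 1 := by rw [hδdef]; linarith
  have hδh : δ ≤ 1/2 := by rw [hδdef]; linarith
  set M : Ω → μ := fun ω => f (X ω) (R ω) with hMdef
  set W : Ω → ρ × μ := fun ω => (R ω, f (X ω) (R ω)) with hWdef
  set perr : Fin s → Fin t → ℝ := fun i j => prP p {ω |
    ¬ (g i j (fun j' => if j < j' then X ω i j' else false) (R ω) (f (X ω) (R ω))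
      = X ω i j)} with hperrdef
  have perr0 : ∀ (i : Fin s) (j : Fin t), 0 ≤ perr i j := fun i j =>
    prP_nonneg p hp0 _
  have perr1 : ∀ (i : Fin s) (j : Fin t), perr i j ≤ 1 := fun i j =>
    prP_le_one p hp0 hp1 _
  -- ============ error-sum bound ============
  have herr_sum : ∑ c : Fin s × Fin t, perr c.1 c.2 ≤ ((s:ℝ) * t) * δ := by
    set Qij : Fin s → Fin t → (Fin s → Fin t → Bool) × ρ → Prop := fun i j v =>
      g i j (fun j' => if j < j' then v.1 i j' else false) v.2 (f v.1 v.2) = v.1 i j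
      with hQij
    set SQ : Fin s → Fin t → ℝ := fun i j =>
      ∑ v : (Fin s → Fin t → Bool) × ρ,
        if Qij i j v then prP p {ω | X ω = v.1 ∧ R ω = v.2} else 0 with hSQ
    have hpairev : ∀ v : (Fin s → Fin t → Bool) × ρ,
        prP p {ω | (X ω, R ω) = v} = prP p {ω | X ω = v.1 ∧ R ω = v.2} := by
      intro v
      congr 1
      ext ω
      simp [Prod.ext_iff]
    have hpair1 : ∑ v : (Fin s → Fin t → Bool) × ρ, prP p {ω | X ω = v.1 ∧ R ω = v.2} = 1 := by
      rw [← Finset.sum_congr rfl fun v _ => hpairev v]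
      exact sum_prP p hp1 (fun ω => (X ω, R ω))
    -- perr in terms of SQ
    have hperrSQ : ∀ (i : Fin s) (j : Fin t), perr i j = 1 - SQ i j := by
      intro i j
      have h1 : perr i j = prP p {ω | ¬ Qij i j (X ω, R ω)} := rfl
      rw [h1, prP_pred p (fun ω => (X ω, R ω)) (fun v => ¬ Qij i j v)]
      refine Eq.trans (Finset.sum_congr rfl
        (g := fun v : (Fin s → Fin t → Bool) × ρ => prP p {ω | X ω = v.1 ∧ R ω = v.2}
          - (if Qij i j v then prP p {ω | X ω = v.1 ∧ R ω = v.2} else 0))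
        (fun v (_ : v ∈ Finset.univ) => ?_)) ?_
      · beta_reduce
        rw [← hpairev v]
        by_cases hv : Qij i j v
        · rw [if_neg (not_not_intro hv), if_pos hv]; ring
        · rw [if_pos hv, if_neg hv]; ring
      · rw [Finset.sum_sub_distrib, hpair1]
    -- success probability
    have hQsucc : 1/2 + ε ≤ prP p {ω | Qij (I ω) (J ω) (X ω, R ω)} := hsucc
    have hkey : prP p {ω | Qij (I ω) (J ω) (X ω, R ω)}
        = (1/((s:ℝ)*t)) * ∑ c : Fin s × Fin t, SQ c.1 c.2 := by
      have e0 : prP p {ω | Qij (I ω) (J ω) (X ω, R ω)}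
          = prP p {ω | (fun u : Fin s × Fin t × (Fin s → Fin t → Bool) × ρ =>
              Qij u.1 u.2.1 u.2.2) ((I ω, J ω, X ω, R ω))} := rfl
      rw [e0, prP_pred p (fun ω => (I ω, J ω, X ω, R ω))
        (fun u => Qij u.1 u.2.1 u.2.2)]
      beta_reduce
      have e1 : ∀ u : Fin s × Fin t × (Fin s → Fin t → Bool) × ρ,
          prP p {ω | (I ω, J ω, X ω, R ω) = u}
            = (1/((s:ℝ)*t)) * prP p {ω | X ω = u.2.2.1 ∧ R ω = u.2.2.2} := by
        intro u
        rw [← hIJ u.1 u.2.1 u.2.2.1 u.2.2.2]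
        congr 1
        ext ω
        simp [Prod.ext_iff, and_assoc]
      refine Eq.trans (Finset.sum_congr rfl
        (g := fun u : Fin s × Fin t × (Fin s → Fin t → Bool) × ρ =>
          (1/((s:ℝ)*t)) * (if Qij u.1 u.2.1 u.2.2 then
            prP p {ω | X ω = u.2.2.1 ∧ R ω = u.2.2.2} else 0))
        (fun u (_ : u ∈ Finset.univ) => ?_)) ?_
      case _ =>
        beta_reduce
        by_cases hu : Qij u.1 u.2.1 u.2.2
        · rw [if_pos hu, if_pos hu, e1 u]
        · rw [if_neg hu, if_neg hu, mul_zero]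
      rw [← Finset.mul_sum]
      congr 1
      rw [Fintype.sum_prod_type]
      rw [show (∑ c : Fin s × Fin t, SQ c.1 c.2) = ∑ a : Fin s, ∑ b : Fin t, SQ a b
        from Fintype.sum_prod_type _]
      refine Finset.sum_congr rfl fun a _ => ?_
      rw [Fintype.sum_prod_type]
    -- combine
    have hSQsum : ((s:ℝ)*t) * (1/2 + ε) ≤ ∑ c : Fin s × Fin t, SQ c.1 c.2 := by
      have := hQsucc
      rw [hkey] at this
      have h2 := mul_le_mul_of_nonneg_left this (le_of_lt hstR)
      rw [← mul_assoc, mul_one_div, div_self hstR.ne', one_mul] at h2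
      exact h2
    have hperr_tot : ∑ c : Fin s × Fin t, perr c.1 c.2
        = ((s:ℝ)*t) - ∑ c : Fin s × Fin t, SQ c.1 c.2 := by
      rw [Finset.sum_congr rfl fun c _ => hperrSQ c.1 c.2, Finset.sum_sub_distrib]
      congr 1
      rw [Finset.sum_const, Finset.card_univ, Fintype.card_prod, Fintype.card_fin,
        Fintype.card_fin, nsmul_eq_mul]
      push_cast
      ring
    rw [hperr_tot, hδdef]
    nlinarith [hSQsum]
  -- ============ chain rule ============
  set XP : ℕ → Ω → (Fin s × Fin t → Bool) := fun m ω c =>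
    if posIdx c < m then X ω c.1 c.2 else false with hXP
  set hnb : Fin s → Fin t → ℝ := fun i j =>
    Real.negMulLog (perr i j) + Real.negMulLog (1 - perr i j) with hhnb
  set B : ℕ → ℝ := fun k => hnb (coI s t hs ht k) (coJ t ht k) with hB
  have chain : ∀ m, m ≤ s * t →
      hn p (fun ω => (XP m ω, W ω)) - hn p W ≤ ∑ k ∈ Finset.range m, B k := by
    intro m
    induction m with
    | zero =>
      intro _
      have he : hn p (fun ω => (XP 0 ω, W ω)) = hn p W := by
        apply hn_biDet p _ W Prod.snd (fun w => (fun _ => false, w))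
        · intro ω; rfl
        · intro ω
          refine Prod.ext ?_ rfl
          funext c
          show XP 0 ω c = false
          simp [hXP]
      simp [he]
    | succ m ih =>
      intro hm1
      have hm : m < s * t := hm1
      have ihm := ih (le_of_lt hm)
      set i : Fin s := coI s t hs ht m with hidef
      set j : Fin t := coJ t ht m with hjdef
      have hpos : posIdx (i, j) = m := posIdx_co hs ht hm
      have e1 : hn p (fun ω => (XP (m+1) ω, W ω))
          = hn p (fun ω => ((X ω i j, XP m ω), W ω)) := by
        apply hn_biDet p _ _
          (fun v => ((v.1 (i,j), fun c => if posIdx c < m then v.1 c else false), v.2))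
          (fun u => ((fun c => if posIdx c < m+1 then
            (if c = (i,j) then u.1.1 else u.1.2 c) else false), u.2))
        · intro ω
          refine Prod.ext (Prod.ext ?_ ?_) rfl
          · show X ω i j = XP (m+1) ω (i,j)
            have : posIdx ((i,j) : Fin s × Fin t) < m + 1 := by omega
            simp [hXP, this]
          · funext c
            show XP m ω c = if posIdx c < m then XP (m+1) ω c else false
            by_cases hc : posIdx c < m
            · have hc1 : posIdx c < m + 1 := by omega
              simp [hXP, hc, hc1]
            · simp [hXP, hc]
        · intro ω
          refine Prod.ext ?_ rfl
          funext c
          show XP (m+1) ω c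
            = if posIdx c < m+1 then (if c = (i,j) then X ω i j else XP m ω c) else false
          by_cases hc : posIdx c < m + 1
          · by_cases hceq : c = (i,j)
            · subst hceq
              simp [hXP, hc]
            · have hne : posIdx c ≠ m := fun h => hceq (posIdx_inj ht (h.trans hpos.symm))
              have hlt : posIdx c < m := by omega
              simp [hXP, hc, hceq, hlt]
          · simp [hXP, hc]
      have e2 : hn p (fun ω => ((X ω i j, XP m ω), W ω))
          = hn p (fun ω => (X ω i j, (XP m ω, W ω))) :=
        hn_relabel p (fun ω => (X ω i j, (XP m ω, W ω)))
          (fun u => ((u.1, u.2.1), u.2.2))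
          (fun a b h => by
            simp only [Prod.mk.injEq] at h
            exact Prod.ext h.1.1 (Prod.ext h.1.2 h.2))
      have e3 : hn p (fun ω => (X ω i j, (XP m ω, W ω))) - hn p (fun ω => (XP m ω, W ω))
          ≤ hn p (fun ω => (X ω i j,
              ((fun j' => if j < j' then XP m ω (i, j') else false : Fin t → Bool), W ω)))
            - hn p (fun ω =>
              ((fun j' => if j < j' then XP m ω (i, j') else false : Fin t → Bool), W ω)) :=
        cond_reduce p hp0 hp1 (fun ω => X ω i j) (fun ω => (XP m ω, W ω))
          (fun v => ((fun j' => if j < j' then v.1 (i, j') else false), v.2))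
      have hφ : ∀ ω, ((fun j' => if j < j' then XP m ω (i, j') else false : Fin t → Bool), W ω)
          = ((fun j' => if j < j' then X ω i j' else false : Fin t → Bool), W ω) := by
        intro ω
        refine Prod.ext ?_ rfl
        funext j'
        by_cases hj : j < j'
        · have hlt : posIdx ((i, j') : Fin s × Fin t) < m := by
            have h2 : i.1 * t + (t - 1 - j.1) = m := hpos
            have hjj : j.1 < j'.1 := hj
            have hj't := j'.2
            show i.1 * t + (t - 1 - j'.1) < m
            omega
          simp [hj, hXP, hlt]
        · simp [hj]
      have c1 : hn p (fun ω => (X ω i j,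
            ((fun j' => if j < j' then XP m ω (i, j') else false : Fin t → Bool), W ω)))
          = hn p (fun ω => (X ω i j,
            ((fun j' => if j < j' then X ω i j' else false : Fin t → Bool), W ω))) :=
        hn_congr p _ _ (fun ω => by rw [hφ ω])
      have c2 : hn p (fun ω =>
            ((fun j' => if j < j' then XP m ω (i, j') else false : Fin t → Bool), W ω))
          = hn p (fun ω =>
            ((fun j' => if j < j' then X ω i j' else false : Fin t → Bool), W ω)) :=
        hn_congr p _ _ hφ
      have e4 : hn p (fun ω => (X ω i j,
            ((fun j' => if j < j' then X ω i j' else false : Fin t → Bool), W ω)))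
          - hn p (fun ω =>
            ((fun j' => if j < j' then X ω i j' else false : Fin t → Bool), W ω))
          ≤ Real.negMulLog (perr i j) + Real.negMulLog (1 - perr i j) :=
        fano p hp0 hp1 (fun ω => X ω i j)
          (fun ω => ((fun j' => if j < j' then X ω i j' else false : Fin t → Bool), W ω))
          (fun v => g i j v.1 v.2.1 v.2.2)
      have hBm : B m = Real.negMulLog (perr i j) + Real.negMulLog (1 - perr i j) := rfl
      rw [Finset.sum_range_succ]
      linarith [ihm, e1, e2, e3, e4, c1, c2, hBm.le, hBm.ge]
  -- ============ assemble ============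
  have hXfull : hn p (fun ω => (X ω, W ω)) = hn p (fun ω => (XP (s*t) ω, W ω)) := by
    apply hn_biDet p _ _
      (fun v => ((fun c => if posIdx c < s*t then v.1 c.1 c.2 else false), v.2))
      (fun u => ((fun i' j' => u.1 (i', j')), u.2))
    · intro ω
      refine Prod.ext ?_ rfl
      funext c
      show XP (s*t) ω c = if posIdx c < s*t then X ω c.1 c.2 else false
      rfl
    · intro ω
      refine Prod.ext ?_ rfl
      funext i' j'
      show X ω i' j' = XP (s*t) ω (i', j')
      simp [hXP, posIdx_lt ht ((i', j') : Fin s × Fin t)]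
  have hreindex : ∑ k ∈ Finset.range (s*t), B k = ∑ c : Fin s × Fin t, hnb c.1 c.2 := by
    refine Finset.sum_nbij' (i := fun k => ((coI s t hs ht k, coJ t ht k) : Fin s × Fin t))
      (j := posIdx) ?_ ?_ ?_ ?_ ?_
    · intro a _; exact Finset.mem_univ _
    · intro c _; exact Finset.mem_range.2 (posIdx_lt ht c)
    · intro k hk; exact posIdx_co hs ht (Finset.mem_range.1 hk)
    · intro c _; exact Prod.ext (coI_posIdx hs ht c) (coJ_posIdx hs ht c)
    · intro k _; rfl
  have hchain : hn p (fun ω => (X ω, W ω)) - hn p W ≤ ∑ c : Fin s × Fin t, hnb c.1 c.2 := by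
    rw [hXfull, ← hreindex]
    exact chain (s*t) le_rfl
  have hXW : hn p (fun ω => (X ω, W ω)) = hn p (fun ω => (X ω, R ω)) :=
    hn_biDet p (fun ω => (X ω, W ω)) (fun ω => (X ω, R ω))
      (fun v => (v.1, v.2.1)) (fun v => (v.1, (v.2, f v.1 v.2)))
      (fun ω => rfl) (fun ω => rfl)
  have hXRind : hn p (fun ω => (X ω, R ω)) = hn p X + hn p R :=
    hn_indep p X R hp1 hXR
  have hHX : hn p X = ((s:ℝ) * t) * Real.log 2 := by
    unfold hn
    rw [Finset.sum_congr rfl fun x _ => by rw [hXunif x]]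
    rw [Finset.sum_const, Finset.card_univ]
    have hcard : Fintype.card (Fin s → Fin t → Bool) = 2 ^ (s*t) := by
      simp [Fintype.card_fun]
      rw [← pow_mul, mul_comm]
    rw [hcard]
    have hneg : Real.negMulLog ((1:ℝ)/2^(s*t)) = (1/2^(s*t)) * ((s*t : ℕ) * Real.log 2) := by
      rw [Real.negMulLog, one_div, Real.log_inv, Real.log_pow]
      ring
    rw [hneg, nsmul_eq_mul]
    push_cast
    field_simp
  have hsub : hn p W ≤ hn p R + hn p M := hn_subadd p hp0 hp1 R M
  have htan : ∑ c : Fin s × Fin t, hnb c.1 c.2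
      ≤ ((s:ℝ)*t) * (Real.negMulLog δ + Real.negMulLog (1-δ)) := by
    set L : ℝ := Real.log (1-δ) - Real.log δ with hLdef
    have hL : 0 ≤ L := by
      rw [hLdef]
      have hle : δ ≤ 1 - δ := by rw [hδdef]; linarith
      have := Real.log_le_log hδ0 hle
      linarith
    have per : ∀ c : Fin s × Fin t, hnb c.1 c.2
        ≤ (Real.negMulLog δ + Real.negMulLog (1-δ))
          + (perr c.1 c.2 - δ) * L := fun c =>
      hnat_tangent (perr c.1 c.2) δ (perr0 c.1 c.2) (perr1 c.1 c.2) hδ0 hδ1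
    have hRHS : ∑ c : Fin s × Fin t, ((Real.negMulLog δ + Real.negMulLog (1-δ))
          + (perr c.1 c.2 - δ) * L)
        = ((s:ℝ)*t) * (Real.negMulLog δ + Real.negMulLog (1-δ))
          + ((∑ c : Fin s × Fin t, perr c.1 c.2) - ((s:ℝ)*t)*δ) * L := by
      rw [Finset.sum_add_distrib, Finset.sum_const, Finset.card_univ, Fintype.card_prod,
        Fintype.card_fin, Fintype.card_fin, nsmul_eq_mul, ← Finset.sum_mul,
        Finset.sum_sub_distrib, Finset.sum_const, Finset.card_univ, Fintype.card_prod,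
        Fintype.card_fin, Fintype.card_fin, nsmul_eq_mul]
      push_cast
      ring
    have hnonpos : ((∑ c : Fin s × Fin t, perr c.1 c.2) - ((s:ℝ)*t)*δ) * L ≤ 0 :=
      mul_nonpos_of_nonpos_of_nonneg (by linarith [herr_sum]) hL
    calc ∑ c : Fin s × Fin t, hnb c.1 c.2
        ≤ ∑ c : Fin s × Fin t, ((Real.negMulLog δ + Real.negMulLog (1-δ))
            + (perr c.1 c.2 - δ) * L) := Finset.sum_le_sum fun c _ => per c
      _ = ((s:ℝ)*t) * (Real.negMulLog δ + Real.negMulLog (1-δ))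
            + ((∑ c : Fin s × Fin t, perr c.1 c.2) - ((s:ℝ)*t)*δ) * L := hRHS
      _ ≤ ((s:ℝ)*t) * (Real.negMulLog δ + Real.negMulLog (1-δ)) := by linarith [hnonpos]
  -- final numeric assembly
  have hM : ((s:ℝ)*t) * Real.log 2 - ((s:ℝ)*t) * (Real.negMulLog δ + Real.negMulLog (1-δ))
      ≤ hn p M := by
    linarith [hsub, hchain, hXW, hXRind, hHX, htan]
  have hlog2 : (0:ℝ) < Real.log 2 := Real.log_pos (by norm_num)
  have hent2 : ent2 p M = hn p M / Real.log 2 := by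
    unfold ent2 hn
    rw [Finset.sum_div]
    refine Finset.sum_congr rfl fun b _ => ?_
    rw [Real.negMulLog, Real.logb]
    ring
  have hbin : binEnt2 δ = (Real.negMulLog δ + Real.negMulLog (1-δ)) / Real.log 2 := by
    unfold binEnt2
    rw [Real.logb, Real.logb, Real.negMulLog, Real.negMulLog]
    ring
  rw [hent2, hbin, le_div_iff₀ hlog2]
  have hfin : (1 - (Real.negMulLog δ + Real.negMulLog (1-δ)) / Real.log 2) * ((s:ℝ) * t)
      * Real.log 2
      = ((s:ℝ)*t) * Real.log 2 - ((s:ℝ)*t) * (Real.negMulLog δ + Real.negMulLog (1-δ)) := by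
    field_simp
  rw [hfin]
  exact hM
end

section
/- Let G be a bipartite graph with parts A and B such that |A| = K and every vertex a ∈ A has degree at least K in G. Then every maximal matching of G matches every vertex of A. -/
/-- Core of the paper's deterministic lower bound (Section 5.2): in a bipartite
graph with parts `A` and `B` where `|A| = K` and every vertex of `A` has degree at
least `K`, every maximal matching matches every vertex of `A`. -/
theorem stmt8 {V : Type} [Fintype V] [DecidableEq V]
    (E : Finset (Sym2 V)) (A B : Finset V) (K : ℕ)
    (hdisj : Disjoint A B)
    (hbip : ∀ e ∈ E, ∃ a ∈ A, ∃ b ∈ B, e = s(a, b))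
    (hA : A.card = K)
    (hdeg : ∀ a ∈ A, K ≤ (E.filter (fun e => a ∈ e)).card)
    (M : Finset (Sym2 V)) (hM : IsMaximalMatching E M) :
    ∀ a ∈ A, ∃ e ∈ M, a ∈ e := by
  intro a ha
  by_contra hcon
  push_neg at hcon
  obtain ⟨⟨hMdiag, hMpair⟩, hME, hmax⟩ := hM
  classical
  set N := E.filter (fun e => a ∈ e) with hNdef
  have haB : a ∉ B := fun h => Finset.disjoint_left.mp hdisj ha h
  -- every edge of N has the form s(a,b) with b ∈ B, and b is covered by M
  have key : ∀ e ∈ N, ∃ b, b ∈ B ∧ e = s(a, b) ∧ ∃ f ∈ M, b ∈ f := by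
    intro e he
    rw [hNdef, Finset.mem_filter] at he
    obtain ⟨heE, hae⟩ := he
    obtain ⟨a', ha', b, hb, rfl⟩ := hbip e heE
    have haa' : a = a' := by
      rcases Sym2.mem_iff.mp hae with h | h
      · exact h
      · exact absurd (h ▸ hb) haB
    subst haa'
    refine ⟨b, hb, rfl, ?_⟩
    by_contra hbno
    push_neg at hbno
    have hab : a ≠ b := fun h => haB (h ▸ hb)
    have hmatch : IsMatching (insert s(a, b) M) := by
      constructor
      · intro e' he'
        rcases Finset.mem_insert.mp he' with rfl | hmem
        · simpa [Sym2.isDiag_iff_proj_eq] using hab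
        · exact hMdiag e' hmem
      · intro e1 h1 e2 h2 hne v ⟨hv1, hv2⟩
        rcases Finset.mem_insert.mp h1 with rfl | h1m
        · rcases Finset.mem_insert.mp h2 with rfl | h2m
          · exact hne rfl
          · rcases Sym2.mem_iff.mp hv1 with rfl | rfl
            · exact hcon e2 h2m hv2
            · exact hbno e2 h2m hv2
        · rcases Finset.mem_insert.mp h2 with rfl | h2m
          · rcases Sym2.mem_iff.mp hv2 with rfl | rfl
            · exact hcon e1 h1m hv1
            · exact hbno e1 h1m hv1
          · exact hMpair e1 h1m e2 h2m hne v ⟨hv1, hv2⟩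
    have heM : s(a, b) ∈ M := hmax _ heE hmatch
    exact hcon _ heM (Sym2.mem_mk_left a b)
  -- choice function F : edge of N ↦ edge of M covering its B-endpoint
  have key' : ∀ e : Sym2 V, ∃ f : Sym2 V,
      e ∈ N → ∃ b, b ∈ B ∧ e = s(a, b) ∧ f ∈ M ∧ b ∈ f := by
    intro e
    by_cases he : e ∈ N
    · obtain ⟨b, hb, hbe, f, hf, hbf⟩ := key e he
      exact ⟨f, fun _ => ⟨b, hb, hbe, hf, hbf⟩⟩
    · exact ⟨s(a, a), fun h => absurd h he⟩
  choose F hF using key'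
  have hFmaps : ∀ e ∈ N, F e ∈ M := fun e he => (hF e he).choose_spec.2.2.1
  have hFinj : Set.InjOn F N := by
    intro e1 h1 e2 h2 hFe
    by_contra hne
    obtain ⟨b1, hb1, hbe1, hf1, hbf1⟩ := hF e1 h1
    obtain ⟨b2, hb2, hbe2, hf2, hbf2⟩ := hF e2 h2
    have hb12 : b1 ≠ b2 := by
      intro h; subst h; exact hne (hbe1.trans hbe2.symm)
    -- F e1 = F e2 ∈ M ⊆ E contains two distinct vertices of B: impossible
    obtain ⟨a', ha', b', hb', hfeq⟩ := hbip (F e1) (hME hf1)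
    rw [hFe] at hbf1
    rw [hFe] at hfeq
    rw [hfeq] at hbf1 hbf2
    rcases Sym2.mem_iff.mp hbf1 with rfl | rfl
    · exact Finset.disjoint_left.mp hdisj ha' hb1
    · rcases Sym2.mem_iff.mp hbf2 with rfl | h
      · exact Finset.disjoint_left.mp hdisj ha' hb2
      · exact hb12 h.symm
  have hKM : K ≤ M.card := by
    calc K ≤ N.card := hdeg a ha
    _ ≤ M.card := Finset.card_le_card_of_injOn F hFmaps hFinj
  -- map edges of M to their A-endpoints
  have key2 : ∀ f : Sym2 V, ∃ a' : V, f ∈ M → a' ∈ A ∧ a' ∈ f := by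
    intro f
    by_cases hf : f ∈ M
    · obtain ⟨a', ha', b', hb', rfl⟩ := hbip f (hME hf)
      exact ⟨a', fun _ => ⟨ha', Sym2.mem_mk_left a' b'⟩⟩
    · exact ⟨a, fun h => absurd h hf⟩
  choose G hG using key2
  have hGmaps : ∀ f ∈ M, G f ∈ A := fun f hf => (hG f hf).1
  have hGinj : Set.InjOn G M := by
    intro f1 h1 f2 h2 hGe
    by_contra hne
    exact hMpair f1 h1 f2 h2 hne (G f1) ⟨(hG f1 h1).2, hGe ▸ (hG f2 h2).2⟩
  have himg : M.image G = A := by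
    apply Finset.eq_of_subset_of_card_le
    · intro x hx
      obtain ⟨f, hf, rfl⟩ := Finset.mem_image.mp hx
      exact hGmaps f hf
    · rw [Finset.card_image_of_injOn hGinj, hA]; exact hKM
  have : a ∈ M.image G := himg ▸ ha
  obtain ⟨f, hf, hGf⟩ := Finset.mem_image.mp this
  exact hcon f hf (hGf ▸ (hG f hf).2)
end

section
/- Let K ≥ 1 and let G' be a bipartite graph with parts A and B such that every vertex a ∈ A has degree exactly 2K in G' and every connected component of G' contains at most K vertices of A. Let D ⊆ E(G') with |D| ≤ K, and let G be the graph obtained from G' by removing the edges in D. Then every maximal matching of G matches every vertex of A. -/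
/-- A matching (as a set of edges): non-loop edges that pairwise share no endpoint. -/
def IsMatchingS {V : Type} (M : Set (Sym2 V)) : Prop :=
  (∀ e ∈ M, ¬ e.IsDiag) ∧ ∀ e ∈ M, ∀ f ∈ M, e ≠ f → ∀ v : V, ¬ (v ∈ e ∧ v ∈ f)

/-- A maximal matching of the graph with edge set `E`. -/
def IsMaximalMatchingS {V : Type} (E M : Set (Sym2 V)) : Prop :=
  IsMatchingS M ∧ M ⊆ E ∧ ∀ e ∈ E, IsMatchingS (insert e M) → e ∈ M

/-- Deletion-robustness claim of the paper's Section 5.2: if `G'` is a bipartite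
graph with parts `A` and `B` in which every `A`-vertex has degree exactly `2K` and
every connected component contains at most `K` vertices of `A`, and `G` is obtained
from `G'` by deleting at most `K` edges, then every maximal matching of `G` matches
every vertex of `A`. -/
theorem stmt9 {V : Type} [Fintype V] [DecidableEq V]
    (K : ℕ) (hK : 1 ≤ K)
    (G' : SimpleGraph V) [DecidableRel G'.Adj]
    (A B : Set V) (hdisj : Disjoint A B)
    (hbip : ∀ v w : V, G'.Adj v w → (v ∈ A ∧ w ∈ B) ∨ (v ∈ B ∧ w ∈ A))
    (hdeg : ∀ a ∈ A, G'.degree a = 2 * K)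
    (hcomp : ∀ c : G'.ConnectedComponent,
      {a | a ∈ A ∧ G'.connectedComponentMk a = c}.ncard ≤ K)
    (D : Finset (Sym2 V)) (hDE : (D : Set (Sym2 V)) ⊆ G'.edgeSet) (hDcard : D.card ≤ K)
    (M : Set (Sym2 V))
    (hM : IsMaximalMatchingS (G'.deleteEdges (D : Set (Sym2 V))).edgeSet M) :
    ∀ a ∈ A, ∃ e ∈ M, a ∈ e := by
  intro a ha
  by_contra hno
  push_neg at hno
  obtain ⟨hMm, hME, hMmax⟩ := hM
  classical
  set N : Finset V := (G'.neighborFinset a).filter (fun b => s(a,b) ∉ D) with hN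
  -- |N| ≥ K
  have hNcard : K ≤ N.card := by
    have h1 : ((G'.neighborFinset a).filter (fun b => s(a,b) ∈ D)).card ≤ D.card := by
      apply Finset.card_le_card_of_injOn (fun b => s(a,b))
      · intro b hb
        simp only [Finset.coe_filter, Finset.mem_filter, Set.mem_setOf_eq] at hb
        exact hb.2
      · intro b1 _ b2 _ h
        exact Sym2.congr_right.mp h
    have h2 : (G'.neighborFinset a).card = 2*K := by
      rw [SimpleGraph.card_neighborFinset_eq_degree]; exact hdeg a ha
    have h3 := Finset.card_filter_add_card_filter_not
        (p := fun b => s(a,b) ∉ D) (s := G'.neighborFinset a)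
    simp only [not_not] at h3
    rw [hN]
    omega
  have hB : ∀ b ∈ N, b ∈ B := by
    intro b hb
    simp only [hN, Finset.mem_filter, SimpleGraph.mem_neighborFinset] at hb
    rcases hbip a b hb.1 with h | h
    · exact h.2
    · exact absurd h.1 (Set.disjoint_left.mp hdisj ha)
  -- each neighbor is matched to a distinct vertex of A ≠ a in the same component
  have key : ∀ b ∈ N, ∃ cc : V, cc ∈ A ∧ cc ≠ a ∧
      G'.connectedComponentMk cc = G'.connectedComponentMk a ∧ s(b,cc) ∈ M := by
    intro b hb
    have hbN := hb
    simp only [hN, Finset.mem_filter, SimpleGraph.mem_neighborFinset] at hbN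
    obtain ⟨hadj, hnD⟩ := hbN
    have hGadj : (G'.deleteEdges (D : Set (Sym2 V))).Adj a b := by
      rw [SimpleGraph.deleteEdges_adj]; exact ⟨hadj, hnD⟩
    have heE : s(a,b) ∈ (G'.deleteEdges (D : Set (Sym2 V))).edgeSet :=
      (SimpleGraph.mem_edgeSet _).mpr hGadj
    have henM : s(a,b) ∉ M := fun h => hno _ h (by simp)
    have hnotins : ¬ IsMatchingS (insert s(a,b) M) := fun h => henM (hMmax _ heE h)
    have hex : ∃ f ∈ M, ∃ v, v ∈ (s(a,b) : Sym2 V) ∧ v ∈ f := by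
      by_contra hcon
      push_neg at hcon
      apply hnotins
      constructor
      · intro e he
        rcases Set.mem_insert_iff.mp he with rfl | he
        · simp [Sym2.isDiag_iff_proj_eq, hadj.ne]
        · exact hMm.1 e he
      · intro e he f hf hne v hv
        rcases Set.mem_insert_iff.mp he with rfl | he <;>
          rcases Set.mem_insert_iff.mp hf with rfl | hf
        · exact hne rfl
        · exact hcon f hf v hv.1 hv.2
        · exact hcon e he v hv.2 hv.1
        · exact hMm.2 e he f hf hne v hv
    obtain ⟨f, hfM, v, hve, hvf⟩ := hex
    have hbf : b ∈ f := by
      rcases Sym2.mem_iff.mp hve with rfl | rfl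
      · exact absurd hvf (hno f hfM)
      · exact hvf
    obtain ⟨cc, rfl⟩ := Sym2.mem_iff_exists.mp hbf
    have hfE : s(b,cc) ∈ G'.edgeSet := by
      have := hME hfM
      rw [SimpleGraph.edgeSet_deleteEdges] at this
      exact this.1
    have hbcc : G'.Adj b cc := (SimpleGraph.mem_edgeSet _).mp hfE
    have hccA : cc ∈ A := by
      rcases hbip b cc hbcc with h | h
      · exact absurd h.1 (Set.disjoint_right.mp hdisj (hB b hb))
      · exact h.2
    refine ⟨cc, hccA, ?_, ?_, hfM⟩
    · rintro rfl
      exact hno _ hfM (Sym2.mem_mk_right _ _)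
    · exact (SimpleGraph.ConnectedComponent.sound
        ((hbcc.symm.reachable).trans (hadj.symm.reachable)))
  choose m hmA hmne hmc hmM using key
  set T : Finset V := insert a (N.attach.image fun b => m b.1 b.2) with hT
  have himg : ∀ b1 ∈ N.attach, ∀ b2 ∈ N.attach,
      m b1.1 b1.2 = m b2.1 b2.2 → b1 = b2 := by
    intro b1 _ b2 _ h
    have h1 := hmM b1.1 b1.2
    have h2 := hmM b2.1 b2.2
    rw [h] at h1
    have hefeq : s(b1.1, m b2.1 b2.2) = s(b2.1, m b2.1 b2.2) := by
      by_contra hne'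
      exact hMm.2 _ h1 _ h2 hne' (m b2.1 b2.2)
        ⟨Sym2.mem_mk_right _ _, Sym2.mem_mk_right _ _⟩
    rcases Sym2.eq_iff.mp hefeq with ⟨hb, _⟩ | ⟨hb, hc⟩
    · exact Subtype.ext hb
    · exact absurd (hb ▸ hmA b2.1 b2.2) (Set.disjoint_right.mp hdisj (hB b1.1 b1.2))
  have hcardT : K + 1 ≤ T.card := by
    have hanotin : a ∉ N.attach.image fun b => m b.1 b.2 := by
      simp only [Finset.mem_image]
      rintro ⟨b, _, hb⟩
      exact hmne b.1 b.2 hb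
    rw [hT, Finset.card_insert_of_notMem hanotin,
      Finset.card_image_of_injOn himg, Finset.card_attach]
    omega
  have hSfin : ({x | x ∈ A ∧ G'.connectedComponentMk x = G'.connectedComponentMk a} :
      Set V).Finite := Set.toFinite _
  have hsub : T ⊆ hSfin.toFinset := by
    intro x hx
    rw [Set.Finite.mem_toFinset]
    rcases Finset.mem_insert.mp hx with rfl | hx
    · exact ⟨ha, rfl⟩
    · obtain ⟨b, _, rfl⟩ := Finset.mem_image.mp hx
      exact ⟨hmA b.1 b.2, hmc b.1 b.2⟩
  have hfin : K + 1 ≤ K := by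
    calc K + 1 ≤ T.card := hcardT
    _ ≤ hSfin.toFinset.card := Finset.card_le_card hsub
    _ ≤ K := by
        rw [← Set.ncard_eq_toFinset_card _ hSfin]
        exact hcomp (G'.connectedComponentMk a)
  omega
end

section
/- For every natural number K ≥ 1, C(3K, 2K) ≥ C(2K − 1, K − 1) · (3/2)^{K+1}. -/
private lemma idA (K : ℕ) :
    ((K:ℝ)+1) * ((2*K+1) * ((2*K+2) * Nat.choose (3*K+3) (2*K+2))) =
    (3*K+1) * ((3*K+2) * ((3*K+3) * Nat.choose (3*K) K)) := by
  have h1n : (3*K+1) * Nat.choose (3*K) K = Nat.choose (3*K+1) (K+1) * (K+1) :=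
    Nat.add_one_mul_choose_eq (3*K) K
  have hs : Nat.choose (3*K+1) (K+1) = Nat.choose (3*K+1) (2*K) := by
    have := Nat.choose_symm (n := 3*K+1) (k := K+1) (by omega)
    have h : 3*K+1 - (K+1) = 2*K := by omega
    rw [h] at this; exact this.symm
  rw [hs] at h1n
  have h2n : (3*K+2) * Nat.choose (3*K+1) (2*K) = Nat.choose (3*K+2) (2*K+1) * (2*K+1) :=
    Nat.add_one_mul_choose_eq (3*K+1) (2*K)
  have h3n : (3*K+3) * Nat.choose (3*K+2) (2*K+1) = Nat.choose (3*K+3) (2*K+2) * (2*K+2) :=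
    Nat.add_one_mul_choose_eq (3*K+2) (2*K+1)
  have h1 : ((3:ℝ)*K+1) * Nat.choose (3*K) K = Nat.choose (3*K+1) (2*K) * ((K:ℝ)+1) := by
    exact_mod_cast congrArg (Nat.cast : ℕ → ℝ) h1n
  have h2 : ((3:ℝ)*K+2) * Nat.choose (3*K+1) (2*K) = Nat.choose (3*K+2) (2*K+1) * (2*(K:ℝ)+1) := by
    exact_mod_cast congrArg (Nat.cast : ℕ → ℝ) h2n
  have h3 : ((3:ℝ)*K+3) * Nat.choose (3*K+2) (2*K+1) = Nat.choose (3*K+3) (2*K+2) * (2*(K:ℝ)+2) := by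
    exact_mod_cast congrArg (Nat.cast : ℕ → ℝ) h3n
  linear_combination (-(((K:ℝ)+1) * (2*(K:ℝ)+1))) * h3 + (-(((K:ℝ)+1) * (3*(K:ℝ)+3))) * h2 +
    (-((3*(K:ℝ)+3) * (3*(K:ℝ)+2))) * h1

private lemma idB (K : ℕ) :
    ((K:ℝ)+1) * (((K:ℝ)+1) * Nat.choose (2*K+2) (K+1)) =
    (2*(K:ℝ)+1) * ((2*(K:ℝ)+2) * Nat.choose (2*K) K) := by
  have h1n : (2*K+1) * Nat.choose (2*K) K = Nat.choose (2*K+1) (K+1) * (K+1) :=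
    Nat.add_one_mul_choose_eq (2*K) K
  rw [Nat.choose_symm_half K] at h1n
  have h2n : (2*K+2) * Nat.choose (2*K+1) K = Nat.choose (2*K+2) (K+1) * (K+1) :=
    Nat.add_one_mul_choose_eq (2*K+1) K
  have h1 : (2*(K:ℝ)+1) * Nat.choose (2*K) K = Nat.choose (2*K+1) K * ((K:ℝ)+1) := by
    exact_mod_cast congrArg (Nat.cast : ℕ → ℝ) h1n
  have h2 : (2*(K:ℝ)+2) * Nat.choose (2*K+1) K = Nat.choose (2*K+2) (K+1) * ((K:ℝ)+1) := by
    exact_mod_cast congrArg (Nat.cast : ℕ → ℝ) h2n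
  linear_combination (-((K:ℝ)+1)) * h2 + (-(2*(K:ℝ)+2)) * h1

private lemma key (K : ℕ) :
    (3:ℝ)^(K+1) * Nat.choose (2*K) K ≤ (2:ℝ)^(K+2) * Nat.choose (3*K) K := by
  induction K with
  | zero => norm_num
  | succ K IH =>
    have ha := idA K
    have hb := idB K
    set P : ℝ := (3:ℝ)^(K+1) with hP
    set Q : ℝ := (2:ℝ)^(K+2) with hQ
    set a : ℝ := (Nat.choose (3*K) K : ℝ)
    set b : ℝ := (Nat.choose (2*K) K : ℝ)
    set a' : ℝ := (Nat.choose (3*K+3) (2*K+2) : ℝ)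
    set b' : ℝ := (Nat.choose (2*K+2) (K+1) : ℝ)
    have hgoal : 3 * (K + 1) = 3*K+3 := by ring
    have hsym2 : (3*K+3).choose (K+1) = (3*K+3).choose (2*K+2) := by
      have := Nat.choose_symm (n := 3*K+3) (k := K+1) (by omega)
      have h : 3*K+3 - (K+1) = 2*K+2 := by omega
      rw [h] at this; exact this.symm
    have hgoal2 : 2 * (K + 1) = 2*K+2 := by ring
    rw [hgoal, hgoal2, hsym2, show K + 1 + 1 = K + 2 from rfl, show K + 1 + 2 = K + 3 from rfl,
      pow_succ (3:ℝ) (K+1), pow_succ (2:ℝ) (K+2), ← hP, ← hQ]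
    -- goal : P * 3 * b' ≤ Q * 2 * a'
    have hpos : (0:ℝ) < ((K:ℝ)+1)^2 * ((2*(K:ℝ)+1) * (2*(K:ℝ)+2)) := by positivity
    rw [← mul_le_mul_iff_right₀ hpos]
    have hPpos : (0:ℝ) < P := by positivity
    have hb0 : (0:ℝ) ≤ b := Nat.cast_nonneg _
    have hPb : (0:ℝ) ≤ P * b := mul_nonneg hPpos.le hb0
    have c1le : (3:ℝ)*(2*K+1)^2*(2*K+2)^2 ≤ 2*((K:ℝ)+1)*(3*K+1)*(3*K+2)*(3*K+3) := by
      nlinarith [sq_nonneg ((K:ℝ)), Nat.cast_nonneg (α := ℝ) K]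
    calc ((K:ℝ)+1)^2 * ((2*(K:ℝ)+1) * (2*(K:ℝ)+2)) * (P * 3 * b')
        = (3*(2*(K:ℝ)+1)^2*(2*(K:ℝ)+2)^2) * (P * b) := by linear_combination (3*P*(2*(K:ℝ)+1)*(2*(K:ℝ)+2)) * hb
      _ ≤ (2*((K:ℝ)+1)*(3*K+1)*(3*K+2)*(3*K+3)) * (P * b) :=
          mul_le_mul_of_nonneg_right c1le hPb
      _ ≤ (2*((K:ℝ)+1)*(3*K+1)*(3*K+2)*(3*K+3)) * (Q * a) := by
          apply mul_le_mul_of_nonneg_left IH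
          positivity
      _ = ((K:ℝ)+1)^2 * ((2*(K:ℝ)+1) * (2*(K:ℝ)+2)) * (Q * 2 * a') := by
          linear_combination (-(2*Q*((K:ℝ)+1))) * ha

/-- For every natural `K ≥ 1`, `C(3K, 2K) ≥ C(2K-1, K-1) * (3/2)^(K+1)`. -/
theorem stmt11 (K : ℕ) (hK : 1 ≤ K) :
    ((2 * K - 1).choose (K - 1) : ℝ) * (3 / 2 : ℝ) ^ (K + 1) ≤ ((3 * K).choose (2 * K) : ℝ) := by
  have hdouble : 2 * (2 * K - 1).choose (K - 1) = (2*K).choose K := by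
    obtain ⟨m, rfl⟩ : ∃ m, K = m + 1 := ⟨K - 1, by omega⟩
    have h1 : 2 * (m+1) - 1 = 2*m+1 := by omega
    have h2 : (m+1) - 1 = m := by omega
    rw [h1, h2]
    have hpas : (2*m+2).choose (m+1) = (2*m+1).choose m + (2*m+1).choose (m+1) :=
      Nat.choose_succ_succ (2*m+1) m
    have h3 : 2 * (m+1) = 2*m+2 := by ring
    rw [h3, hpas, Nat.choose_symm_half m]
    ring
  have hsym : (3*K).choose (2*K) = (3*K).choose K := by
    have := Nat.choose_symm (n := 3*K) (k := 2*K) (by omega)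
    have h : 3*K - 2*K = K := by omega
    rw [h] at this; exact this.symm
  have hkey := key K
  have hc : (2:ℝ) * ((2 * K - 1).choose (K - 1) : ℝ) = ((2*K).choose K : ℝ) := by
    exact_mod_cast congrArg (Nat.cast : ℕ → ℝ) hdouble
  rw [hsym, div_pow]
  have h2pos : (0:ℝ) < 2^(K+1) := by positivity
  rw [show ((2 * K - 1).choose (K - 1) : ℝ) * ((3:ℝ)^(K+1)/2^(K+1))
      = (((2 * K - 1).choose (K - 1) : ℝ) * 3^(K+1))/2^(K+1) from by ring,
    div_le_iff₀ h2pos]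
  have hpw : (2:ℝ)^(K+2) = 2^(K+1) * 2 := pow_succ 2 (K+1)
  rw [hpw] at hkey
  have hcb := congrArg (· * (3:ℝ)^(K+1)) hc
  nlinarith [hkey, hcb]
end

section
/- Let V be a finite vertex set, let I be a set of edges on V, let M_1, …, M_t ⊆ I be matchings such that for every j ∈ {1, …, t}, M_j is a maximal matching of the graph (V, I \ (M_1 ∪ … ∪ M_{j-1})). Let D ⊆ I, let ε ∈ (0, 1], and suppose that |M_1| + … + |M_t| ≥ |V|/2 + |D|/ε. Then the graph (V, (M_1 ∪ … ∪ M_t) \ D) contains a matching M' with 2·|M'| ≥ (1 − ε)·ν(G), where G = (V, I \ D) and ν(G) denotes the maximum size of a matching in G. -/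
/-- `ν(G)`: the maximum size of a matching in the graph with edge set `E`. -/
noncomputable def matchingNumber {V : Type} (E : Finset (Sym2 V)) : ℕ :=
  sSup {k | ∃ M : Finset (Sym2 V), IsMatching M ∧ M ⊆ E ∧ M.card = k}

lemma isMatching_subset {V : Type} {A B : Finset (Sym2 V)} (hB : IsMatching B) (h : A ⊆ B) :
    IsMatching A :=
  ⟨fun e he => hB.1 e (h he), fun e he f hf => hB.2 e (h he) f (h hf)⟩

lemma isMatching_empty {V : Type} : IsMatching (∅ : Finset (Sym2 V)) := by
  constructor <;> intro e he <;> simp at he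

lemma bddAbove_matchSet {V : Type} (E : Finset (Sym2 V)) :
    BddAbove {k | ∃ M : Finset (Sym2 V), IsMatching M ∧ M ⊆ E ∧ M.card = k} := by
  refine ⟨E.card, fun k hk => ?_⟩
  obtain ⟨A, _, hAE, rfl⟩ := hk
  exact Finset.card_le_card hAE

lemma le_matchingNumber {V : Type} {E A : Finset (Sym2 V)} (hA : IsMatching A) (hAE : A ⊆ E) :
    A.card ≤ matchingNumber E :=
  le_csSup (bddAbove_matchSet E) ⟨A, hA, hAE, rfl⟩

lemma matchingNumber_spec {V : Type} (E : Finset (Sym2 V)) :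
    ∃ N : Finset (Sym2 V), IsMatching N ∧ N ⊆ E ∧ N.card = matchingNumber E := by
  have h := Nat.sSup_mem
    (s := {k | ∃ M : Finset (Sym2 V), IsMatching M ∧ M ⊆ E ∧ M.card = k})
    ⟨0, ∅, isMatching_empty, Finset.empty_subset E, Finset.card_empty⟩ (bddAbove_matchSet E)
  obtain ⟨N, h1, h2, h3⟩ := h
  exact ⟨N, h1, h2, h3⟩

lemma sym2_mem_two {V : Type} {f : Sym2 V} {v1 v2 : V} (h1 : v1 ∈ f) (h2 : v2 ∈ f)
    (h12 : v1 ≠ v2) {v : V} (hv : v ∈ f) : v = v1 ∨ v = v2 := by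
  induction f using Sym2.ind with
  | _ x y =>
    rw [Sym2.mem_iff] at h1 h2 hv
    rcases h1 with rfl | rfl <;> rcases h2 with rfl | rfl <;> rcases hv with rfl | rfl <;> tauto

/-- Combinatorial core of the paper's Theorem 1.4: a hierarchical maximal matching
structure `M 0, …, M (t-1)` on the inserted edges `I` of total size at least
`|V|/2 + |D|/ε` retains, after the deletions `D` are applied, a matching `M'` with
`2·|M'| ≥ (1 - ε)·ν(G)` where `G = (V, I \ D)`. -/
theorem stmt13 {V : Type} [Fintype V] [DecidableEq V]
    (I D : Finset (Sym2 V)) (hIloop : ∀ e ∈ I, ¬ e.IsDiag) (hDI : D ⊆ I)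
    (t : ℕ) (M : Fin t → Finset (Sym2 V)) (hMI : ∀ j, M j ⊆ I)
    (hHier : ∀ j : Fin t, IsMaximalMatching (I \ (Finset.Iio j).biUnion M) (M j))
    (ε : ℝ) (hε0 : 0 < ε) (hε1 : ε ≤ 1)
    (hsize : (Fintype.card V : ℝ) / 2 + (D.card : ℝ) / ε ≤ ∑ j, ((M j).card : ℝ)) :
    ∃ M' ⊆ Finset.univ.biUnion M \ D, IsMatching M' ∧
      (1 - ε) * (matchingNumber (I \ D) : ℝ) ≤ 2 * (M'.card : ℝ) := by
  classical
  set U : Finset (Sym2 V) := Finset.univ.biUnion M with hUdef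
  set W : Finset (Sym2 V) := U \ D with hWdef
  obtain ⟨Y, hYm, hYW, hYcard⟩ := matchingNumber_spec W
  obtain ⟨N, hNm, hNID, hNcard⟩ := matchingNumber_spec (I \ D)
  refine ⟨Y, hYW, hYm, ?_⟩
  rw [← hNcard]
  -- basic facts
  have hNI : N ⊆ I := hNID.trans Finset.sdiff_subset
  have hND : ∀ e ∈ N, e ∉ D := fun e he => (Finset.mem_sdiff.mp (hNID he)).2
  have hMjmatch : ∀ j : Fin t, IsMatching (M j) := fun j => (hHier j).1
  have hMjU : ∀ j : Fin t, M j ⊆ U := fun j e he =>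
    Finset.mem_biUnion.mpr ⟨j, Finset.mem_univ j, he⟩
  have hNuniq : ∀ {a b : Sym2 V} (v : V), a ∈ N → b ∈ N → v ∈ a → v ∈ b → a = b := by
    intro a b v ha hb hva hvb
    by_contra h
    exact hNm.2 a ha b hb h v ⟨hva, hvb⟩
  have hle : ∀ A : Finset (Sym2 V), IsMatching A → A ⊆ W → A.card ≤ Y.card := by
    intro A hA hAW
    exact (le_matchingNumber hA hAW).trans_eq hYcard.symm
  -- the key per-level inequality
  have key : ∀ j : Fin t, N.card ≤ 2 * Y.card + 2 * ((M j) ∩ D).card := by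
    intro j
    have hblock : ∀ e ∈ N \ U, ∃ f ∈ M j, ∃ v : V, v ∈ e ∧ v ∈ f := by
      intro e he
      rw [Finset.mem_sdiff] at he
      obtain ⟨heN, heU⟩ := he
      have heI : e ∈ I := hNI heN
      have heEj : e ∈ I \ (Finset.Iio j).biUnion M := by
        rw [Finset.mem_sdiff]
        refine ⟨heI, fun hmem => ?_⟩
        obtain ⟨i, _, hei⟩ := Finset.mem_biUnion.mp hmem
        exact heU (hMjU i hei)
      by_contra hcon
      push_neg at hcon
      have hins : IsMatching (insert e (M j)) := by
        constructor
        · intro g hg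
          rcases Finset.mem_insert.mp hg with rfl | hg'
          · exact hIloop g heI
          · exact (hMjmatch j).1 g hg'
        · intro g hg f hf hgf v hv
          rcases Finset.mem_insert.mp hg with rfl | hg' <;>
            rcases Finset.mem_insert.mp hf with rfl | hf'
          · exact hgf rfl
          · exact hcon f hf' v hv.1 hv.2
          · exact hcon g hg' v hv.2 hv.1
          · exact (hMjmatch j).2 g hg' f hf' hgf v hv
      exact heU (hMjU j ((hHier j).2.2 e heEj hins))
    have hblock' : ∀ e : Sym2 V, ∃ f : Sym2 V,
        e ∈ N \ U → f ∈ M j ∧ ∃ v : V, v ∈ e ∧ v ∈ f := by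
      intro e
      by_cases he : e ∈ N \ U
      · obtain ⟨f, hf1, hf2⟩ := hblock e he
        exact ⟨f, fun _ => ⟨hf1, hf2⟩⟩
      · exact ⟨e, fun h => absurd h he⟩
    choose φ hφ using hblock'
    set R : Finset (Sym2 V) := N \ U with hRdef
    set Q : Finset (Sym2 V) := N ∩ U with hQdef
    have hRN : R ⊆ N := Finset.sdiff_subset
    have hcardsplit : R.card + Q.card = N.card := Finset.card_sdiff_add_card_inter N U
    have hφmem : ∀ e ∈ R, φ e ∈ M j := fun e he => (hφ e he).1
    have hfib : R.card = ∑ f ∈ M j, (R.filter (fun e => φ e = f)).card :=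
      Finset.card_eq_sum_card_fiberwise hφmem
    -- each fiber has at most 2 elements
    have fib2 : ∀ f : Sym2 V, (R.filter (fun e => φ e = f)).card ≤ 2 := by
      intro f
      have hsub : R.filter (fun e => φ e = f) ⊆
          N.filter (fun e => ∃ v : V, v ∈ e ∧ v ∈ f) := by
        intro e he
        rw [Finset.mem_filter] at he ⊢
        obtain ⟨heR, heq⟩ := he
        refine ⟨hRN heR, ?_⟩
        obtain ⟨v, hv1, hv2⟩ := (hφ e heR).2
        exact ⟨v, hv1, heq ▸ hv2⟩
      refine (Finset.card_le_card hsub).trans ?_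
      induction f using Sym2.ind with
      | _ x y =>
        have hsub2 : N.filter (fun e => ∃ v : V, v ∈ e ∧ v ∈ s(x, y)) ⊆
            N.filter (fun e => x ∈ e) ∪ N.filter (fun e => y ∈ e) := by
          intro e he
          rw [Finset.mem_filter] at he
          obtain ⟨heN, v, hve, hvf⟩ := he
          rcases Sym2.mem_iff.mp hvf with rfl | rfl
          · exact Finset.mem_union_left _ (Finset.mem_filter.mpr ⟨heN, hve⟩)
          · exact Finset.mem_union_right _ (Finset.mem_filter.mpr ⟨heN, hve⟩)
        have h1 : (N.filter (fun e => x ∈ e)).card ≤ 1 := by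
          refine Finset.card_le_one.mpr ?_
          intro a ha b hb
          rw [Finset.mem_filter] at ha hb
          exact hNuniq x ha.1 hb.1 ha.2 hb.2
        have h2 : (N.filter (fun e => y ∈ e)).card ≤ 1 := by
          refine Finset.card_le_one.mpr ?_
          intro a ha b hb
          rw [Finset.mem_filter] at ha hb
          exact hNuniq y ha.1 hb.1 ha.2 hb.2
        calc (N.filter (fun e => ∃ v : V, v ∈ e ∧ v ∈ s(x, y))).card
            ≤ (N.filter (fun e => x ∈ e) ∪ N.filter (fun e => y ∈ e)).card :=
              Finset.card_le_card hsub2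
          _ ≤ (N.filter (fun e => x ∈ e)).card + (N.filter (fun e => y ∈ e)).card :=
              Finset.card_union_le _ _
          _ ≤ 2 := by omega
    -- the "double blockers"
    set T : Finset (Sym2 V) :=
      (M j \ D).filter (fun f => 2 ≤ (R.filter (fun e => φ e = f)).card) with hTdef
    have hTMD : T ⊆ M j \ D := Finset.filter_subset _ _
    have hTW : T ⊆ W := by
      intro f hf
      have h' := hTMD hf
      rw [Finset.mem_sdiff] at h'
      exact Finset.mem_sdiff.mpr ⟨hMjU j h'.1, h'.2⟩
    have hQW : Q ⊆ W := by
      intro g hg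
      rw [Finset.mem_inter] at hg
      exact Finset.mem_sdiff.mpr ⟨hg.2, hND g hg.1⟩
    -- every vertex of a double blocker lies on an edge of R
    have hdouble : ∀ f ∈ T, ∀ v : V, v ∈ f → ∃ e ∈ R, v ∈ e := by
      intro f hf v hvf
      rw [hTdef, Finset.mem_filter] at hf
      obtain ⟨hfMD, hf2⟩ := hf
      obtain ⟨e1, he1, e2, he2, hne⟩ := Finset.one_lt_card.mp
        (by omega : 1 < (R.filter (fun e => φ e = f)).card)
      rw [Finset.mem_filter] at he1 he2
      obtain ⟨v1, hv1e, hv1f⟩ := (hφ e1 he1.1).2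
      obtain ⟨v2, hv2e, hv2f⟩ := (hφ e2 he2.1).2
      rw [he1.2] at hv1f
      rw [he2.2] at hv2f
      have hv12 : v1 ≠ v2 := by
        rintro rfl
        exact hne (hNuniq v1 (hRN he1.1) (hRN he2.1) hv1e hv2e)
      rcases sym2_mem_two hv1f hv2f hv12 hvf with rfl | rfl
      · exact ⟨e1, he1.1, hv1e⟩
      · exact ⟨e2, he2.1, hv2e⟩
    -- T ∪ Q is a matching in W
    have hTQdisj : Disjoint T Q := by
      rw [Finset.disjoint_left]
      intro f hfT hfQ
      rw [hTdef, Finset.mem_filter] at hfT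
      obtain ⟨e1, he1, _, _, _⟩ := Finset.one_lt_card.mp (by omega : 1 < (R.filter (fun e => φ e = f)).card)
      rw [Finset.mem_filter] at he1
      obtain ⟨v1, hv1e, hv1f⟩ := (hφ e1 he1.1).2
      rw [he1.2] at hv1f
      have hfN : f ∈ N := (Finset.mem_inter.mp hfQ).1
      have : e1 = f := hNuniq v1 (hRN he1.1) hfN hv1e hv1f
      have he1U : e1 ∉ U := (Finset.mem_sdiff.mp he1.1).2
      exact he1U (this ▸ (Finset.mem_inter.mp hfQ).2)
    have hTQmatch : IsMatching (T ∪ Q) := by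
      constructor
      · intro e he
        rcases Finset.mem_union.mp he with h | h
        · exact (hMjmatch j).1 e (Finset.mem_sdiff.mp (hTMD h)).1
        · exact hNm.1 e (Finset.mem_inter.mp h).1
      · intro a ha b hb hab v hv
        rcases Finset.mem_union.mp ha with hA | hA <;> rcases Finset.mem_union.mp hb with hB | hB
        · exact (hMjmatch j).2 a (Finset.mem_sdiff.mp (hTMD hA)).1 b
            (Finset.mem_sdiff.mp (hTMD hB)).1 hab v hv
        · obtain ⟨e, heR, hve⟩ := hdouble a hA v hv.1
          have heq : e = b := hNuniq v (hRN heR) (Finset.mem_inter.mp hB).1 hve hv.2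
          exact (Finset.mem_sdiff.mp heR).2 (heq ▸ (Finset.mem_inter.mp hB).2)
        · obtain ⟨e, heR, hve⟩ := hdouble b hB v hv.2
          have heq : e = a := hNuniq v (hRN heR) (Finset.mem_inter.mp hA).1 hve hv.1
          exact (Finset.mem_sdiff.mp heR).2 (heq ▸ (Finset.mem_inter.mp hA).2)
        · exact hNm.2 a (Finset.mem_inter.mp hA).1 b (Finset.mem_inter.mp hB).1 hab v hv
    have hTQle : T.card + Q.card ≤ Y.card := by
      rw [← Finset.card_union_of_disjoint hTQdisj]
      exact hle _ hTQmatch (Finset.union_subset hTW hQW)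
    -- counting
    have hμle : (M j \ D).card ≤ Y.card :=
      hle _ (isMatching_subset (hMjmatch j) Finset.sdiff_subset)
        (fun f hf => Finset.mem_sdiff.mpr
          ⟨hMjU j (Finset.mem_sdiff.mp hf).1, (Finset.mem_sdiff.mp hf).2⟩)
    have hsplitsum : ∑ f ∈ (M j) ∩ D, (R.filter (fun e => φ e = f)).card
        + ∑ f ∈ (M j) \ D, (R.filter (fun e => φ e = f)).card
        = ∑ f ∈ M j, (R.filter (fun e => φ e = f)).card :=
      Finset.sum_inter_add_sum_sdiff _ _ _
    have hs1 : ∑ f ∈ (M j) ∩ D, (R.filter (fun e => φ e = f)).card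
        ≤ ((M j) ∩ D).card * 2 := by
      have := Finset.sum_le_card_nsmul ((M j) ∩ D)
        (fun f => (R.filter (fun e => φ e = f)).card) 2 (fun f _ => fib2 f)
      simpa using this
    have hs2 : ∑ f ∈ (M j) \ D, (R.filter (fun e => φ e = f)).card
        ≤ T.card + (M j \ D).card := by
      have hsplit2 : ∑ f ∈ T, (R.filter (fun e => φ e = f)).card
          + ∑ f ∈ (M j \ D).filter
              (fun f => ¬ 2 ≤ (R.filter (fun e => φ e = f)).card),
            (R.filter (fun e => φ e = f)).card
          = ∑ f ∈ (M j) \ D, (R.filter (fun e => φ e = f)).card := by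
        rw [hTdef]
        exact Finset.sum_filter_add_sum_filter_not _ _ _
      have hT2 : ∑ f ∈ T, (R.filter (fun e => φ e = f)).card ≤ T.card * 2 := by
        have := Finset.sum_le_card_nsmul T
          (fun f => (R.filter (fun e => φ e = f)).card) 2 (fun f _ => fib2 f)
        simpa using this
      have hnotT : ∑ f ∈ (M j \ D).filter
            (fun f => ¬ 2 ≤ (R.filter (fun e => φ e = f)).card),
          (R.filter (fun e => φ e = f)).card
          ≤ ((M j \ D).filter
            (fun f => ¬ 2 ≤ (R.filter (fun e => φ e = f)).card)).card * 1 := by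
        refine (Finset.sum_le_card_nsmul _ _ 1 ?_).trans_eq (by simp [smul_eq_mul])
        intro f hf
        rw [Finset.mem_filter] at hf
        omega
      have hcards : T.card + ((M j \ D).filter
            (fun f => ¬ 2 ≤ (R.filter (fun e => φ e = f)).card)).card
          = (M j \ D).card := by
        rw [hTdef]
        exact Finset.card_filter_add_card_filter_not _
      omega
    -- assemble
    have hRle : R.card ≤ ((M j) ∩ D).card * 2 + (T.card + (M j \ D).card) := by
      rw [hfib, ← hsplitsum]
      omega
    omega
  -- sum over the levels : t * N.card ≤ t * (2 * Y.card) + 2 * D.card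
  have hdisjM : ∀ (i i' : Fin t), i < i' → Disjoint (M i) (M i') := by
    intro i i' hii
    rw [Finset.disjoint_left]
    intro f hfi hfi'
    have h' := (hHier i').2.1 hfi'
    rw [Finset.mem_sdiff] at h'
    exact h'.2 (Finset.mem_biUnion.mpr ⟨i, Finset.mem_Iio.mpr hii, hfi⟩)
  have hsumδ : ∑ j : Fin t, ((M j) ∩ D).card ≤ D.card := by
    have hdisj : ∀ i ∈ Finset.univ, ∀ i' ∈ (Finset.univ : Finset (Fin t)), i ≠ i' →
        Disjoint ((M i) ∩ D) ((M i') ∩ D) := by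
      intro i _ i' _ hne
      rcases lt_or_gt_of_ne hne with h | h
      · exact (hdisjM i i' h).mono Finset.inter_subset_left Finset.inter_subset_left
      · exact ((hdisjM i' i h).mono Finset.inter_subset_left Finset.inter_subset_left).symm
    rw [← Finset.card_biUnion hdisj]
    refine Finset.card_le_card ?_
    intro f hf
    obtain ⟨i, _, hfi⟩ := Finset.mem_biUnion.mp hf
    exact (Finset.mem_inter.mp hfi).2
  have hμ : ∀ j : Fin t, (M j \ D).card ≤ Y.card := by
    intro j
    refine hle _ (isMatching_subset (hMjmatch j) Finset.sdiff_subset) ?_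
    intro f hf
    rw [Finset.mem_sdiff] at hf
    exact Finset.mem_sdiff.mpr ⟨hMjU j hf.1, hf.2⟩
  have hsumM : ∑ j : Fin t, (M j).card ≤ t * Y.card + D.card := by
    have h1 : ∑ j : Fin t, (M j).card
        = ∑ j : Fin t, ((M j \ D).card + ((M j) ∩ D).card) :=
      Finset.sum_congr rfl fun j _ => (Finset.card_sdiff_add_card_inter (M j) D).symm
    rw [h1, Finset.sum_add_distrib]
    have h2 : ∑ j : Fin t, (M j \ D).card ≤ t * Y.card := by
      have := Finset.sum_le_card_nsmul Finset.univ (fun j : Fin t => (M j \ D).card)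
        Y.card (fun j _ => hμ j)
      simpa [mul_comm] using this
    omega
  have hsumkey : t * N.card ≤ t * (2 * Y.card) + 2 * D.card := by
    have h1 : ∑ _j : Fin t, N.card ≤ ∑ j : Fin t, (2 * Y.card + 2 * ((M j) ∩ D).card) :=
      Finset.sum_le_sum fun j _ => key j
    rw [Finset.sum_const, Finset.sum_add_distrib, Finset.sum_const] at h1
    simp only [Finset.card_univ, Fintype.card_fin, smul_eq_mul] at h1
    have h2 : ∑ j : Fin t, 2 * ((M j) ∩ D).card = 2 * ∑ j : Fin t, ((M j) ∩ D).card :=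
      (Finset.mul_sum _ _ _).symm
    omega
  -- now the real arithmetic
  have hSnat : (∑ j, ((M j).card : ℝ)) = ((∑ j : Fin t, (M j).card : ℕ) : ℝ) := by
    push_cast
    rfl
  rw [hSnat] at hsize
  rcases eq_or_lt_of_le hε1 with rfl | hεlt
  · -- ε = 1 : trivial
    have : (1 - (1:ℝ)) * (N.card : ℝ) = 0 := by ring
    rw [this]
    positivity
  -- ε < 1
  have hn0 : (0:ℝ) ≤ (Fintype.card V : ℝ) := by positivity
  have hsum' : ((∑ j : Fin t, (M j).card : ℕ) : ℝ) ≤ (t : ℝ) * (Y.card : ℝ) + (D.card : ℝ) := by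
    have := hsumM
    push_cast
    exact_mod_cast this
  have hKbound : (D.card : ℝ) * (1 - ε) ≤ ε * ((t : ℝ) * (Y.card : ℝ)) := by
    have h2 : (D.card : ℝ) / ε ≤ (t : ℝ) * (Y.card : ℝ) + (D.card : ℝ) := by
      have := hsize.trans hsum'
      linarith
    have h3 : (D.card : ℝ) ≤ ((t : ℝ) * (Y.card : ℝ) + (D.card : ℝ)) * ε :=
      (div_le_iff₀ hε0).mp h2
    nlinarith
  rcases Nat.eq_zero_or_pos t with rfl | htpos
  · -- t = 0 : forces everything empty
    push_cast at hKbound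
    have hK0 : (D.card : ℝ) ≤ 0 := by nlinarith
    have hKz : (D.card : ℝ) = 0 := le_antisymm hK0 (by positivity)
    have hsz : ((∑ j : Fin 0, (M j).card : ℕ) : ℝ) = 0 := by simp
    have hnz : (Fintype.card V : ℝ) ≤ 0 := by
      rw [hsz] at hsize
      rw [hKz] at hsize
      simp at hsize
      linarith
    have hVempty : IsEmpty V := by
      rw [← Fintype.card_eq_zero_iff]
      have : (Fintype.card V : ℝ) = 0 := le_antisymm hnz hn0
      exact_mod_cast this
    have hNempty : N = ∅ := by
      refine Finset.eq_empty_of_forall_notMem ?_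
      intro e
      induction e using Sym2.ind with
      | _ x y => exact (hVempty.false x).elim
    rw [hNempty]
    have hpos : (0:ℝ) ≤ 2 * (Y.card : ℝ) := by positivity
    simpa using hpos
  · -- t ≥ 1
    have ht0 : (0:ℝ) < (t : ℝ) := by exact_mod_cast htpos
    have hF1 : (t : ℝ) * (N.card : ℝ) ≤ (t : ℝ) * (2 * (Y.card : ℝ)) + 2 * (D.card : ℝ) := by
      exact_mod_cast hsumkey
    have h1ε : (0:ℝ) ≤ 1 - ε := by linarith
    have hmain : (t : ℝ) * ((1 - ε) * (N.card : ℝ)) ≤ (t : ℝ) * (2 * (Y.card : ℝ)) := by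
      nlinarith [mul_le_mul_of_nonneg_left hF1 h1ε, hKbound]
    have := (mul_le_mul_iff_right₀ ht0).mp hmain
    linarith
end
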